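/- arXiv:2201.08063 — 5 statements merged into one kernel-verified Lean document; each statement's English description precedes it below -/
import Mathlib

section
/- Let $N > 1$ and $1 \le i \le N$ be integers. Given any complex numbers $x_1,\dots,x_{i-1},x_{i+1},\dots,x_N$ such that $x_j \neq x_{j'}$ for all $1 \le j \le i-1$ and $i+1 \le j' \le N$, there exist complex numbers $x_i, y_1,\dots,y_{N-1}$ such that the matrix $X = \sum_{j=1}^N x_j E_{j,j} + \sum_{j=1}^{N-1} E_{j,j+1} + \sum_{j=1}^{i-1} y_j E_{i,j} + \sum_{j=i}^{N-1} y_j E_{j+1,i}$ satisfies $\det(\lambda I_N + X) = \lambda^N$, i.e. $X$ is nilpotent with characteristic polynomial $\lambda^N$. -/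
open Matrix

/-- The matrix `X = ∑ xⱼ Eⱼⱼ + ∑ E_{j,j+1} + (entries y in row i, columns < i) +
(entries y in column i, rows > i)`, written 0-indexed. -/
noncomputable def hypMat (N : ℕ) (i : Fin N) (x : Fin N → ℂ) (y : ℕ → ℂ) :
    Matrix (Fin N) (Fin N) ℂ :=
  Matrix.of fun p q =>
    if p = q then x p
    else if (q : ℕ) = (p : ℕ) + 1 then 1
    else if p = i ∧ q < i then y (q : ℕ)
    else if q = i ∧ i < p then y ((p : ℕ) - 1)
    else 0

open Polynomial Finset

lemma sum_pair_support {N : ℕ} (f : Fin N → ℂ) (a b : Fin N) (hab : a ≠ b)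
    (h : ∀ s, s ≠ a → s ≠ b → f s = 0) : ∑ s, f s = f a + f b := by
  classical
  rw [← Finset.sum_pair hab]
  refine (Finset.sum_subset (Finset.subset_univ _) fun s _ hs => ?_).symm
  simp only [Finset.mem_insert, Finset.mem_singleton, not_or] at hs
  exact h s hs.1 hs.2

lemma sum_single_support {N : ℕ} (f : Fin N → ℂ) (a : Fin N)
    (h : ∀ s, s ≠ a → f s = 0) : ∑ s, f s = f a := by
  classical
  rw [← Finset.sum_singleton f a]
  refine (Finset.sum_subset (Finset.subset_univ _) fun s _ hs => ?_).symm
  simp only [Finset.mem_singleton] at hs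
  exact h s hs

lemma sum_zero_support {N : ℕ} (f : Fin N → ℂ) (h : ∀ s, f s = 0) : ∑ s, f s = 0 :=
  Finset.sum_eq_zero fun s _ => h s

section Det

variable (N : ℕ) (x' : Fin N → ℂ) (lam : ℂ) (y : ℕ → ℂ) (i : Fin N)

noncomputable def dd (k : ℕ) : ℂ := if h : k < N then lam + x' ⟨k, h⟩ else 1

noncomputable def Dlt (a : ℕ) : ℂ := ∏ k ∈ Finset.range a, dd N x' lam k

noncomputable def Dgt (b : ℕ) : ℂ := ∏ k ∈ Finset.Ico (b + 1) N, dd N x' lam k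

noncomputable def zeta (q : ℕ) : ℂ :=
  ∑ a ∈ Finset.range (q + 1), (-1 : ℂ) ^ (q - a) * y a * Dlt N x' lam a

noncomputable def etaf (q : ℕ) : ℂ :=
  ∑ b ∈ Finset.Ico q N, (-1 : ℂ) ^ (b - q) * y (b - 1) * Dgt N x' lam b

noncomputable def cc (q : ℕ) : ℂ := zeta N x' lam y q / Dlt N x' lam (q + 1)

noncomputable def ee (q : ℕ) : ℂ := etaf N x' lam y q / Dgt N x' lam (q - 1)

noncomputable def Mm : Matrix (Fin N) (Fin N) ℂ :=
  lam • (1 : Matrix (Fin N) (Fin N) ℂ) + hypMat N i x' y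

noncomputable def Rm : Matrix (Fin N) (Fin N) ℂ :=
  1 - Matrix.of (fun p q => if p = i ∧ q < i then cc N x' lam y (q : ℕ) else 0)

noncomputable def Cmm : Matrix (Fin N) (Fin N) ℂ :=
  1 - Matrix.of (fun p q => if q = i ∧ i < p then ee N x' lam y (p : ℕ) else 0)

noncomputable def Am : Matrix (Fin N) (Fin N) ℂ :=
  Matrix.of fun p q =>
    if q = i then
      (if p = i then
        dd N x' lam (i : ℕ) - (if (i : ℕ) + 1 < N then ee N x' lam y ((i : ℕ) + 1) else 0)
      else if (i : ℕ) = (p : ℕ) + 1 then 1 else 0)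
    else Mm N x' lam y i p q

noncomputable def Tm : Matrix (Fin N) (Fin N) ℂ :=
  Matrix.of fun p q =>
    if p = q then
      (if p = i then
        dd N x' lam (i : ℕ) - (if 0 < (i : ℕ) then cc N x' lam y ((i : ℕ) - 1) else 0)
          - (if (i : ℕ) + 1 < N then ee N x' lam y ((i : ℕ) + 1) else 0)
      else dd N x' lam (p : ℕ))
    else if (q : ℕ) = (p : ℕ) + 1 then 1 else 0

lemma dd_lt {k : ℕ} (h : k < N) : dd N x' lam k = lam + x' ⟨k, h⟩ := dif_pos h

lemma M_apply (p q : Fin N) :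
    Mm N x' lam y i p q =
      if p = q then dd N x' lam (p : ℕ)
      else if (q : ℕ) = (p : ℕ) + 1 then 1
      else if p = i ∧ q < i then y (q : ℕ)
      else if q = i ∧ i < p then y ((p : ℕ) - 1)
      else 0 := by
  have hdd : dd N x' lam (p : ℕ) = lam + x' p := by
    rw [dd_lt N x' lam p.isLt]
  simp only [Mm, Matrix.add_apply, Matrix.smul_apply, Matrix.one_apply, hypMat,
    Matrix.of_apply, smul_eq_mul]
  by_cases hpq : p = q
  · subst hpq
    rw [if_pos rfl, hdd]
    simp
  · simp only [if_neg hpq, mul_zero, zero_add]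

lemma M_diag (p : Fin N) : Mm N x' lam y i p p = dd N x' lam (p : ℕ) := by
  rw [M_apply, if_pos rfl]

lemma M_super (p q : Fin N) (h : (q : ℕ) = (p : ℕ) + 1) : Mm N x' lam y i p q = 1 := by
  rw [M_apply, if_neg (by intro hc; subst hc; omega), if_pos h]

lemma M_rowi (q : Fin N) (h : (q : ℕ) < (i : ℕ)) : Mm N x' lam y i i q = y (q : ℕ) := by
  rw [M_apply, if_neg (by intro hc; subst hc; omega),
    if_neg (by omega), if_pos ⟨rfl, h⟩]

lemma M_coli (p : Fin N) (h : (i : ℕ) < (p : ℕ)) : Mm N x' lam y i p i = y ((p : ℕ) - 1) := by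
  rw [M_apply, if_neg (by intro hc; subst hc; omega), if_neg (by omega),
    if_neg (by intro hc; have := hc.1; subst this; omega), if_pos ⟨rfl, h⟩]

lemma M_zero (p q : Fin N) (h1 : p ≠ q) (h2 : (q : ℕ) ≠ (p : ℕ) + 1)
    (h3 : ¬(p = i ∧ (q : ℕ) < (i : ℕ))) (h4 : ¬(q = i ∧ (i : ℕ) < (p : ℕ))) :
    Mm N x' lam y i p q = 0 := by
  rw [M_apply, if_neg h1, if_neg h2,
    if_neg (fun hc => h3 ⟨hc.1, Fin.lt_def.mp hc.2⟩),
    if_neg (fun hc => h4 ⟨hc.1, Fin.lt_def.mp hc.2⟩)]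


section hyp
variable (hd : ∀ k : Fin N, k ≠ i → lam + x' k ≠ 0)

include hd

lemma dd_ne {k : ℕ} (hk : k < N) (hki : k ≠ (i : ℕ)) : dd N x' lam k ≠ 0 := by
  rw [dd_lt N x' lam hk]
  exact hd ⟨k, hk⟩ (Fin.ne_of_val_ne hki)

lemma Dlt_ne {a : ℕ} (ha : a ≤ (i : ℕ)) : Dlt N x' lam a ≠ 0 := by
  rw [Dlt]
  apply Finset.prod_ne_zero_iff.2
  intro k hk
  rw [Finset.mem_range] at hk
  have hiN := i.isLt
  exact dd_ne N x' lam i hd (by omega) (by omega)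

lemma Dgt_ne {b : ℕ} (hb : (i : ℕ) ≤ b) : Dgt N x' lam b ≠ 0 := by
  rw [Dgt]
  apply Finset.prod_ne_zero_iff.2
  intro k hk
  rw [Finset.mem_Ico] at hk
  exact dd_ne N x' lam i hd (by omega) (by omega)

end hyp

lemma zeta_succ (q : ℕ) :
    zeta N x' lam y (q + 1) = y (q + 1) * Dlt N x' lam (q + 1) - zeta N x' lam y q := by
  rw [zeta, Finset.sum_range_succ]
  have h1 : ∑ a ∈ Finset.range (q + 1), (-1 : ℂ) ^ (q + 1 - a) * y a * Dlt N x' lam a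
      = -zeta N x' lam y q := by
    rw [zeta, ← Finset.sum_neg_distrib]
    refine Finset.sum_congr rfl fun a ha => ?_
    rw [Finset.mem_range] at ha
    have h2 : q + 1 - a = (q - a) + 1 := by omega
    rw [h2, pow_succ]
    ring
  rw [h1]
  simp only [Nat.sub_self, pow_zero, one_mul]
  ring

lemma etaf_split (q : ℕ) (hq : q < N) :
    etaf N x' lam y q = y (q - 1) * Dgt N x' lam q - etaf N x' lam y (q + 1) := by
  rw [etaf, Finset.sum_eq_sum_Ico_succ_bot hq]
  have h1 : ∑ b ∈ Finset.Ico (q + 1) N, (-1 : ℂ) ^ (b - q) * y (b - 1) * Dgt N x' lam b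
      = -etaf N x' lam y (q + 1) := by
    rw [etaf, ← Finset.sum_neg_distrib]
    refine Finset.sum_congr rfl fun b hb => ?_
    rw [Finset.mem_Ico] at hb
    have h2 : b - q = (b - (q + 1)) + 1 := by omega
    rw [h2, pow_succ]
    ring
  rw [h1]
  simp only [Nat.sub_self, pow_zero, one_mul]
  ring

lemma etaf_top : etaf N x' lam y N = 0 := by
  rw [etaf, Finset.Ico_self, Finset.sum_empty]

lemma ee_top : ee N x' lam y N = 0 := by
  rw [ee, etaf_top, zero_div]

lemma K2 (hd : ∀ k : Fin N, k ≠ i → lam + x' k ≠ 0) {q : ℕ} (hq : q < (i : ℕ)) :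
    cc N x' lam y q * dd N x' lam q + (if q = 0 then 0 else cc N x' lam y (q - 1)) = y q := by
  have hiN := i.isLt
  have hdq : dd N x' lam q ≠ 0 := dd_ne N x' lam i hd (by omega) (by omega)
  have hDq : Dlt N x' lam q ≠ 0 := Dlt_ne N x' lam i hd (by omega)
  have hsplit : Dlt N x' lam (q + 1) = Dlt N x' lam q * dd N x' lam q :=
    Finset.prod_range_succ _ _
  rcases Nat.eq_zero_or_pos q with h0 | h0
  · subst h0
    rw [if_pos rfl, add_zero, cc, hsplit]
    have hz : zeta N x' lam y 0 = y 0 := by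
      rw [zeta]
      simp [Dlt]
    rw [hz]
    have hD0 : Dlt N x' lam 0 = 1 := by rw [Dlt]; simp
    rw [hD0] at hsplit ⊢
    field_simp
  · rw [if_neg (by omega)]
    have hq1 : q - 1 + 1 = q := by omega
    have hzq : zeta N x' lam y q = y q * Dlt N x' lam q - zeta N x' lam y (q - 1) := by
      have := zeta_succ N x' lam y (q - 1)
      rwa [hq1] at this
    rw [cc, cc, hq1, hsplit, hzq]
    field_simp
    ring

lemma K2' (hd : ∀ k : Fin N, k ≠ i → lam + x' k ≠ 0) {q : ℕ} (hq1 : (i : ℕ) < q) (hq2 : q < N) :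
    dd N x' lam q * ee N x' lam y q + ee N x' lam y (q + 1) = y (q - 1) := by
  have hdq : dd N x' lam q ≠ 0 := dd_ne N x' lam i hd (by omega) (by omega)
  have hDq : Dgt N x' lam q ≠ 0 := Dgt_ne N x' lam i hd (by omega)
  have hsplit : Dgt N x' lam (q - 1) = dd N x' lam q * Dgt N x' lam q := by
    rw [Dgt, Dgt]
    have hq1' : q - 1 + 1 = q := by omega
    rw [hq1']
    exact Finset.prod_eq_prod_Ico_succ_bot hq2 _
  have hetaq : etaf N x' lam y q = y (q - 1) * Dgt N x' lam q - etaf N x' lam y (q + 1) :=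
    etaf_split N x' lam y q hq2
  have hee1 : ee N x' lam y (q + 1) = etaf N x' lam y (q + 1) / Dgt N x' lam q := by
    rw [ee, Nat.add_sub_cancel]
  rw [ee, hsplit, hetaq, hee1]
  field_simp
  ring


lemma prod_MC (hd : ∀ k : Fin N, k ≠ i → lam + x' k ≠ 0) :
    Mm N x' lam y i * Cmm N x' lam y i = Am N x' lam y i := by
  have hiN := i.isLt
  ext p q
  rw [Matrix.mul_apply]
  have hsum : ∀ s : Fin N, Mm N x' lam y i p s * Cmm N x' lam y i s q
      = (if s = q then Mm N x' lam y i p s else 0)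
        - Mm N x' lam y i p s * (if q = i ∧ i < s then ee N x' lam y (s : ℕ) else 0) := by
    intro s
    simp only [Cmm, Matrix.sub_apply, Matrix.one_apply, Matrix.of_apply, mul_sub]
    congr 1
    split_ifs <;> ring
  rw [Finset.sum_congr rfl fun s _ => hsum s, Finset.sum_sub_distrib,
    Finset.sum_ite_eq' Finset.univ q fun s => Mm N x' lam y i p s, if_pos (Finset.mem_univ q)]
  by_cases hq : q = i
  case neg =>
    have hz : ∑ s : Fin N,
        Mm N x' lam y i p s * (if q = i ∧ i < s then ee N x' lam y (s : ℕ) else 0) = 0 :=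
      sum_zero_support _ fun s => by rw [if_neg fun hc => hq hc.1, mul_zero]
    rw [hz, sub_zero, Am, Matrix.of_apply, if_neg hq]
  case pos =>
    subst hq
    rcases lt_trichotomy ((p : ℕ)) ((q : ℕ)) with hpi | hpi | hpi
    · -- p < i
      have hz : ∑ s : Fin N,
          Mm N x' lam y q p s * (if q = q ∧ q < s then ee N x' lam y (s : ℕ) else 0) = 0 := by
        apply sum_zero_support
        intro s
        rcases le_or_gt (s : ℕ) ((q : ℕ)) with hsi | hsi
        · rw [if_neg fun hc => by have := Fin.lt_def.mp hc.2; omega, mul_zero]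
        · rw [M_zero N x' lam y q p s (Fin.ne_of_val_ne (by omega)) (by omega)
            (fun hc => absurd (congrArg Fin.val hc.1) (by omega))
            (fun hc => absurd (congrArg Fin.val hc.1) (by omega)), zero_mul]
      rw [hz, sub_zero, Am, Matrix.of_apply, if_pos rfl,
        if_neg (Fin.ne_of_val_ne (by omega : (p : ℕ) ≠ (q : ℕ)))]
      by_cases hsup : (q : ℕ) = (p : ℕ) + 1
      · rw [if_pos hsup, M_super N x' lam y q p q hsup]
      · rw [if_neg hsup, M_zero N x' lam y q p q (Fin.ne_of_val_ne (by omega)) hsup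
          (fun hc => absurd (congrArg Fin.val hc.1) (by omega))
          (fun hc => by have := Fin.lt_def.mp hc.2; omega)]
    · -- p = i
      have hp : p = q := Fin.ext hpi
      subst hp
      by_cases hiN1 : (p : ℕ) + 1 < N
      · have hS : ∑ s : Fin N,
            Mm N x' lam y p p s * (if p = p ∧ p < s then ee N x' lam y (s : ℕ) else 0)
            = ee N x' lam y ((p : ℕ) + 1) := by
          rw [sum_single_support _ (⟨(p : ℕ) + 1, hiN1⟩ : Fin N) fun s hs => ?_]
          · rw [if_pos ⟨rfl, Fin.lt_def.mpr (by simp)⟩,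
              M_super N x' lam y p p ⟨(p : ℕ) + 1, hiN1⟩ rfl, one_mul]
          · have hs' : (s : ℕ) ≠ (p : ℕ) + 1 := fun hc => hs (Fin.ext hc)
            rcases le_or_gt (s : ℕ) ((p : ℕ)) with hsi | hsi
            · rw [if_neg fun hc => by have := Fin.lt_def.mp hc.2; omega, mul_zero]
            · rw [M_zero N x' lam y p p s (Fin.ne_of_val_ne (by omega)) (by omega)
                (fun hc => by have := Fin.lt_def.mp hc.2; omega)
                (fun hc => absurd (congrArg Fin.val hc.1) (by omega)), zero_mul]
        rw [hS, M_diag, Am, Matrix.of_apply, if_pos rfl, if_pos rfl, if_pos hiN1]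
      · have hS : ∑ s : Fin N,
            Mm N x' lam y p p s * (if p = p ∧ p < s then ee N x' lam y (s : ℕ) else 0) = 0 := by
          apply sum_zero_support
          intro s
          rw [if_neg fun hc => by have h1 := Fin.lt_def.mp hc.2; have := s.isLt; omega, mul_zero]
        rw [hS, sub_zero, M_diag, Am, Matrix.of_apply, if_pos rfl, if_pos rfl, if_neg hiN1,
          sub_zero]
    · -- i < p
      have hMpi : Mm N x' lam y q p q = y ((p : ℕ) - 1) := M_coli N x' lam y q p hpi
      by_cases hpN : (p : ℕ) + 1 < N
      · have hS : ∑ s : Fin N,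
            Mm N x' lam y q p s * (if q = q ∧ q < s then ee N x' lam y (s : ℕ) else 0)
            = dd N x' lam (p : ℕ) * ee N x' lam y (p : ℕ) + ee N x' lam y ((p : ℕ) + 1) := by
          rw [sum_pair_support _ p (⟨(p : ℕ) + 1, hpN⟩ : Fin N)
            (Fin.ne_of_val_ne (by simp)) fun s hs1 hs2 => ?_]
          · rw [if_pos ⟨rfl, Fin.lt_def.mpr hpi⟩, if_pos ⟨rfl, Fin.lt_def.mpr (by simp; omega)⟩,
              M_diag, M_super N x' lam y q p ⟨(p : ℕ) + 1, hpN⟩ rfl, one_mul]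
          · have hs1' : (s : ℕ) ≠ (p : ℕ) := fun hc => hs1 (Fin.ext hc)
            have hs2' : (s : ℕ) ≠ (p : ℕ) + 1 := fun hc => hs2 (Fin.ext hc)
            rcases le_or_gt (s : ℕ) ((q : ℕ)) with hsi | hsi
            · rw [if_neg fun hc => by have := Fin.lt_def.mp hc.2; omega, mul_zero]
            · rw [M_zero N x' lam y q p s (Fin.ne_of_val_ne (by omega)) (by omega)
                (fun hc => absurd (congrArg Fin.val hc.1) (by omega))
                (fun hc => absurd (congrArg Fin.val hc.1) (by omega)), zero_mul]
        rw [hS, hMpi, Am, Matrix.of_apply, if_pos rfl,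
          if_neg (Fin.ne_of_val_ne (by omega : (p : ℕ) ≠ (q : ℕ))), if_neg (by omega)]
        have hK := K2' N x' lam y q hd hpi p.isLt
        linear_combination -hK
      · have hS : ∑ s : Fin N,
            Mm N x' lam y q p s * (if q = q ∧ q < s then ee N x' lam y (s : ℕ) else 0)
            = dd N x' lam (p : ℕ) * ee N x' lam y (p : ℕ) := by
          rw [sum_single_support _ p fun s hs => ?_]
          · rw [if_pos ⟨rfl, Fin.lt_def.mpr hpi⟩, M_diag]
          · have hs' : (s : ℕ) ≠ (p : ℕ) := fun hc => hs (Fin.ext hc)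
            rcases le_or_gt (s : ℕ) ((q : ℕ)) with hsi | hsi
            · rw [if_neg fun hc => by have := Fin.lt_def.mp hc.2; omega, mul_zero]
            · rw [M_zero N x' lam y q p s (Fin.ne_of_val_ne (by omega))
                (by have := s.isLt; omega)
                (fun hc => absurd (congrArg Fin.val hc.1) (by omega))
                (fun hc => absurd (congrArg Fin.val hc.1) (by omega)), zero_mul]
        rw [hS, hMpi, Am, Matrix.of_apply, if_pos rfl,
          if_neg (Fin.ne_of_val_ne (by omega : (p : ℕ) ≠ (q : ℕ))), if_neg (by omega)]
        have hK := K2' N x' lam y q hd hpi p.isLt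
        have hN' : (p : ℕ) + 1 = N := by have := p.isLt; omega
        rw [hN', ee_top] at hK
        linear_combination -hK

lemma prod_RA (hd : ∀ k : Fin N, k ≠ i → lam + x' k ≠ 0) :
    Rm N x' lam y i * Am N x' lam y i = Tm N x' lam y i := by
  have hiN := i.isLt
  ext p q
  rw [Matrix.mul_apply]
  have hsum : ∀ r : Fin N, Rm N x' lam y i p r * Am N x' lam y i r q
      = (if p = r then Am N x' lam y i r q else 0)
        - (if p = i ∧ r < i then cc N x' lam y (r : ℕ) else 0) * Am N x' lam y i r q := by
    intro r
    simp only [Rm, Matrix.sub_apply, Matrix.one_apply, Matrix.of_apply, sub_mul]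
    congr 1
    split_ifs <;> ring
  rw [Finset.sum_congr rfl fun r _ => hsum r, Finset.sum_sub_distrib,
    Finset.sum_ite_eq Finset.univ p fun r => Am N x' lam y i r q, if_pos (Finset.mem_univ p)]
  by_cases hp : p = i
  case neg =>
    have hz : ∑ r : Fin N,
        (if p = i ∧ r < i then cc N x' lam y (r : ℕ) else 0) * Am N x' lam y i r q = 0 :=
      sum_zero_support _ fun r => by rw [if_neg fun hc => hp hc.1, zero_mul]
    rw [hz, sub_zero]
    by_cases hq : q = i
    · subst hq
      simp [Am, Tm, hp]
    · rcases eq_or_ne p q with hpq | hpq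
      · subst hpq
        rw [Am, Matrix.of_apply, if_neg hq, M_diag, Tm, Matrix.of_apply, if_pos rfl, if_neg hp]
      · rw [Am, Matrix.of_apply, if_neg hq, Tm, Matrix.of_apply, if_neg hpq]
        by_cases hsup : (q : ℕ) = (p : ℕ) + 1
        · rw [if_pos hsup, M_super N x' lam y i p q hsup]
        · rw [if_neg hsup, M_zero N x' lam y i p q hpq hsup
            (fun hc => hp hc.1) (fun hc => hq hc.1)]
  case pos =>
    subst hp
    by_cases hq : q = p
    · subst hq
      by_cases hi0 : 0 < (q : ℕ)
      · have hS : ∑ r : Fin N,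
            (if q = q ∧ r < q then cc N x' lam y (r : ℕ) else 0) * Am N x' lam y q r q
            = cc N x' lam y ((q : ℕ) - 1) := by
          rw [sum_single_support _ (⟨(q : ℕ) - 1, by omega⟩ : Fin N) fun r hr => ?_]
          · rw [if_pos ⟨rfl, Fin.lt_def.mpr (by simp; omega)⟩, Am, Matrix.of_apply, if_pos rfl,
              if_neg (Fin.ne_of_val_ne (by simp; omega)), if_pos (by simp; omega), mul_one]
          · have hr' : (r : ℕ) ≠ (q : ℕ) - 1 := fun hc => hr (Fin.ext hc)
            by_cases hrq : (r : ℕ) < (q : ℕ)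
            · rw [if_pos (⟨rfl, Fin.lt_def.mpr hrq⟩ : q = q ∧ r < q), Am, Matrix.of_apply,
                if_pos rfl, if_neg (Fin.ne_of_val_ne (by omega : (r : ℕ) ≠ (q : ℕ))),
                if_neg (by omega : ¬((q : ℕ) = (r : ℕ) + 1)), mul_zero]
            · rw [if_neg fun hc => by have := Fin.lt_def.mp hc.2; omega, zero_mul]
        rw [hS, Am, Matrix.of_apply, if_pos rfl, if_pos rfl, Tm, Matrix.of_apply, if_pos rfl,
          if_pos rfl, if_pos hi0]
        ring
      · have hS : ∑ r : Fin N,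
            (if q = q ∧ r < q then cc N x' lam y (r : ℕ) else 0) * Am N x' lam y q r q = 0 :=
          sum_zero_support _ fun r => by
            rw [if_neg fun hc => by have := Fin.lt_def.mp hc.2; omega, zero_mul]
        rw [hS, Am, Matrix.of_apply, if_pos rfl, if_pos rfl, Tm, Matrix.of_apply, if_pos rfl,
          if_pos rfl, if_neg hi0]
        ring
    · -- p plays the role of i, q ≠ p
      have hqi : (q : ℕ) ≠ (p : ℕ) := fun hc => hq (Fin.ext hc)
      rcases lt_or_gt_of_ne hqi with hqlt | hqgt
      · -- q < i : row clearing, uses K2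
        by_cases hq0 : (q : ℕ) = 0
        · have hS : ∑ r : Fin N,
              (if p = p ∧ r < p then cc N x' lam y (r : ℕ) else 0) * Am N x' lam y p r q
              = cc N x' lam y (q : ℕ) * dd N x' lam (q : ℕ) := by
            rw [sum_single_support _ q fun r hr => ?_]
            · rw [if_pos ⟨rfl, Fin.lt_def.mpr hqlt⟩, Am, Matrix.of_apply, if_neg hq, M_diag]
            · have hr' : (r : ℕ) ≠ (q : ℕ) := fun hc => hr (Fin.ext hc)
              by_cases hri : (r : ℕ) < (p : ℕ)
              · rw [Am, Matrix.of_apply, if_neg hq,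
                  M_zero N x' lam y p r q (Fin.ne_of_val_ne (by omega)) (by omega)
                    (fun hc => absurd (congrArg Fin.val hc.1) (by omega))
                    (fun hc => hq hc.1), mul_zero]
              · rw [if_neg fun hc => by have := Fin.lt_def.mp hc.2; omega, zero_mul]
          rw [hS, Am, Matrix.of_apply, if_neg hq, M_rowi N x' lam y p q hqlt, Tm,
            Matrix.of_apply, if_neg fun hc => hq hc.symm, if_neg (by omega)]
          have hK := K2 N x' lam y p hd hqlt
          rw [if_pos hq0] at hK
          linear_combination -hK
        · have hS : ∑ r : Fin N,
              (if p = p ∧ r < p then cc N x' lam y (r : ℕ) else 0) * Am N x' lam y p r q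
              = cc N x' lam y (q : ℕ) * dd N x' lam (q : ℕ)
                + cc N x' lam y ((q : ℕ) - 1) := by
            rw [sum_pair_support _ q (⟨(q : ℕ) - 1, by omega⟩ : Fin N)
              (Fin.ne_of_val_ne (by simp; omega)) fun r hr1 hr2 => ?_]
            · rw [if_pos ⟨rfl, Fin.lt_def.mpr hqlt⟩,
                if_pos ⟨rfl, Fin.lt_def.mpr (by simp; omega)⟩]
              simp only [Am, Matrix.of_apply, if_neg hq]
              rw [M_diag,
                M_super N x' lam y p ⟨(q : ℕ) - 1, by omega⟩ q (by simp; omega), mul_one]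
            · have hr1' : (r : ℕ) ≠ (q : ℕ) := fun hc => hr1 (Fin.ext hc)
              have hr2' : (r : ℕ) ≠ (q : ℕ) - 1 := fun hc => hr2 (Fin.ext hc)
              by_cases hri : (r : ℕ) < (p : ℕ)
              · rw [Am, Matrix.of_apply, if_neg hq,
                  M_zero N x' lam y p r q (Fin.ne_of_val_ne (by omega)) (by omega)
                    (fun hc => absurd (congrArg Fin.val hc.1) (by omega))
                    (fun hc => hq hc.1), mul_zero]
              · rw [if_neg fun hc => by have := Fin.lt_def.mp hc.2; omega, zero_mul]
          rw [hS, Am, Matrix.of_apply, if_neg hq, M_rowi N x' lam y p q hqlt, Tm,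
            Matrix.of_apply, if_neg fun hc => hq hc.symm, if_neg (by omega)]
          have hK := K2 N x' lam y p hd hqlt
          rw [if_neg hq0] at hK
          linear_combination -hK
      · -- i < q
        have hS : ∑ r : Fin N,
            (if p = p ∧ r < p then cc N x' lam y (r : ℕ) else 0) * Am N x' lam y p r q = 0 := by
          apply sum_zero_support
          intro r
          by_cases hri : (r : ℕ) < (p : ℕ)
          · rw [Am, Matrix.of_apply, if_neg hq,
              M_zero N x' lam y p r q (Fin.ne_of_val_ne (by omega)) (by omega)
                (fun hc => absurd (congrArg Fin.val hc.1) (by omega))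
                (fun hc => hq hc.1), mul_zero]
          · rw [if_neg fun hc => by have := Fin.lt_def.mp hc.2; omega, zero_mul]
        rw [hS, sub_zero, Am, Matrix.of_apply, if_neg hq, Tm, Matrix.of_apply,
          if_neg fun hc => hq hc.symm]
        by_cases hsup : (q : ℕ) = (p : ℕ) + 1
        · rw [if_pos hsup, M_super N x' lam y p p q hsup]
        · rw [if_neg hsup, M_zero N x' lam y p p q (fun hc => hq hc.symm) hsup
            (fun hc => by have := hc.1 ▸ hqgt; omega)
            (fun hc => hq hc.1)]


lemma det_Rm : (Rm N x' lam y i).det = 1 := by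
  have ht : (Rm N x' lam y i).BlockTriangular OrderDual.toDual := by
    intro p q hlt
    have hpq : (p : ℕ) < (q : ℕ) := Fin.lt_def.mp (OrderDual.toDual_lt_toDual.mp hlt)
    simp only [Rm, Matrix.sub_apply, Matrix.one_apply, Matrix.of_apply]
    rw [if_neg (Fin.ne_of_val_ne (by omega)), if_neg (fun hc => by
      have h1 := congrArg Fin.val hc.1
      have h2 := Fin.lt_def.mp hc.2
      omega), sub_zero]
  rw [Matrix.det_of_lowerTriangular _ ht]
  apply Finset.prod_eq_one
  intro p _
  simp only [Rm, Matrix.sub_apply, Matrix.one_apply, Matrix.of_apply]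
  rw [if_neg (fun hc : p = i ∧ p < i => by
    have h1 := congrArg Fin.val hc.1
    have h2 := Fin.lt_def.mp hc.2
    omega)]
  simp

lemma det_Cm : (Cmm N x' lam y i).det = 1 := by
  have ht : (Cmm N x' lam y i).BlockTriangular OrderDual.toDual := by
    intro p q hlt
    have hpq : (p : ℕ) < (q : ℕ) := Fin.lt_def.mp (OrderDual.toDual_lt_toDual.mp hlt)
    simp only [Cmm, Matrix.sub_apply, Matrix.one_apply, Matrix.of_apply]
    rw [if_neg (Fin.ne_of_val_ne (by omega)), if_neg (fun hc => by
      have h1 := congrArg Fin.val hc.1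
      have h2 := Fin.lt_def.mp hc.2
      omega), sub_zero]
  rw [Matrix.det_of_lowerTriangular _ ht]
  apply Finset.prod_eq_one
  intro p _
  simp only [Cmm, Matrix.sub_apply, Matrix.one_apply, Matrix.of_apply]
  rw [if_neg (fun hc : p = i ∧ i < p => by
    have h1 := congrArg Fin.val hc.1
    have h2 := Fin.lt_def.mp hc.2
    omega)]
  simp

lemma det_Tm : (Tm N x' lam y i).det = ∏ p, Tm N x' lam y i p p := by
  refine Matrix.det_of_upperTriangular ?_
  intro p q hlt
  have hpq : (q : ℕ) < (p : ℕ) := Fin.lt_def.mp hlt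
  simp only [Tm, Matrix.of_apply]
  rw [if_neg (Fin.ne_of_val_ne (by omega)), if_neg (by omega)]

theorem det_formula (hd : ∀ k : Fin N, k ≠ i → lam + x' k ≠ 0) :
    (lam • (1 : Matrix (Fin N) (Fin N) ℂ) + hypMat N i x' y).det
      = dd N x' lam (i : ℕ) * Dlt N x' lam (i : ℕ) * Dgt N x' lam (i : ℕ)
        - (∑ a ∈ Finset.range (i : ℕ), (-1 : ℂ) ^ ((i : ℕ) - 1 - a) * y a * Dlt N x' lam a)
            * Dgt N x' lam (i : ℕ)
        - (∑ b ∈ Finset.Ico ((i : ℕ) + 1) N, (-1 : ℂ) ^ (b - ((i : ℕ) + 1)) * y (b - 1)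
            * Dgt N x' lam b) * Dlt N x' lam (i : ℕ) := by
  have hiN := i.isLt
  have hdetM : (Mm N x' lam y i).det = (Tm N x' lam y i).det := by
    have h3 : Rm N x' lam y i * (Mm N x' lam y i * Cmm N x' lam y i) = Tm N x' lam y i := by
      rw [prod_MC N x' lam y i hd, prod_RA N x' lam y i hd]
    have h4 := congrArg Matrix.det h3
    rw [Matrix.det_mul, Matrix.det_mul, det_Rm, det_Cm, one_mul, mul_one] at h4
    exact h4
  set F : ℕ → ℂ := fun k : ℕ => if k = (i : ℕ) then
          dd N x' lam (i : ℕ) - (if 0 < (i : ℕ) then cc N x' lam y ((i : ℕ) - 1) else 0)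
            - (if (i : ℕ) + 1 < N then ee N x' lam y ((i : ℕ) + 1) else 0)
        else dd N x' lam k with hF
  have hdiag : ∀ p : Fin N, Tm N x' lam y i p p = F (p : ℕ) := by
    intro p
    rw [hF]
    by_cases hpi : p = i
    · subst hpi
      simp [Tm]
    · have hv : (p : ℕ) ≠ (i : ℕ) := fun hc => hpi (Fin.ext hc)
      simp [Tm, hpi, hv]
  have hZ : (if 0 < (i : ℕ) then cc N x' lam y ((i : ℕ) - 1) else 0) * Dlt N x' lam (i : ℕ)
      = ∑ a ∈ Finset.range (i : ℕ), (-1 : ℂ) ^ ((i : ℕ) - 1 - a) * y a * Dlt N x' lam a := by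
    by_cases hi0 : 0 < (i : ℕ)
    · rw [if_pos hi0, cc]
      have h1 : (i : ℕ) - 1 + 1 = (i : ℕ) := by omega
      rw [h1, div_mul_cancel₀ _ (Dlt_ne N x' lam i hd (le_refl _)), zeta, h1]
    · rw [if_neg hi0, zero_mul]
      have h0 : (i : ℕ) = 0 := by omega
      rw [h0, Finset.range_zero, Finset.sum_empty]
  have hW : (if (i : ℕ) + 1 < N then ee N x' lam y ((i : ℕ) + 1) else 0) * Dgt N x' lam (i : ℕ)
      = ∑ b ∈ Finset.Ico ((i : ℕ) + 1) N, (-1 : ℂ) ^ (b - ((i : ℕ) + 1)) * y (b - 1)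
          * Dgt N x' lam b := by
    by_cases hi1 : (i : ℕ) + 1 < N
    · rw [if_pos hi1, ee, Nat.add_sub_cancel,
        div_mul_cancel₀ _ (Dgt_ne N x' lam i hd (le_refl _)), etaf]
    · rw [if_neg hi1, zero_mul]
      have h0 : (i : ℕ) + 1 = N := by omega
      rw [h0, Finset.Ico_self, Finset.sum_empty]
  have hcalc : (Mm N x' lam y i).det
      = Dlt N x' lam (i : ℕ)
        * ((dd N x' lam (i : ℕ) - (if 0 < (i : ℕ) then cc N x' lam y ((i : ℕ) - 1) else 0)
            - (if (i : ℕ) + 1 < N then ee N x' lam y ((i : ℕ) + 1) else 0))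
          * Dgt N x' lam (i : ℕ)) := by
    rw [hdetM, det_Tm, Finset.prod_congr rfl fun p _ => hdiag p,
      Fin.prod_univ_eq_prod_range F N, ← Finset.prod_range_mul_prod_Ico F (le_of_lt hiN)]
    congr 1
    · refine Finset.prod_congr rfl fun k hk => ?_
      rw [Finset.mem_range] at hk
      rw [hF]
      exact if_neg (by omega)
    · rw [Finset.prod_eq_prod_Ico_succ_bot hiN]
      have hFi : F (i : ℕ)
          = dd N x' lam (i : ℕ) - (if 0 < (i : ℕ) then cc N x' lam y ((i : ℕ) - 1) else 0)
            - (if (i : ℕ) + 1 < N then ee N x' lam y ((i : ℕ) + 1) else 0) := by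
        rw [hF]
        exact if_pos rfl
      rw [hFi]
      congr 1
      refine Finset.prod_congr rfl fun k hk => ?_
      rw [Finset.mem_Ico] at hk
      rw [hF]
      exact if_neg (by omega)
  have hMm : (lam • (1 : Matrix (Fin N) (Fin N) ℂ) + hypMat N i x' y).det
      = (Mm N x' lam y i).det := rfl
  rw [hMm, hcalc]
  linear_combination (- Dgt N x' lam (i : ℕ)) * hZ + (- Dlt N x' lam (i : ℕ)) * hW

end Det

/-- every polynomial of degree `< n` is a combination of given monic polynomials of
degrees `0, 1, …, n-1`. -/
lemma span_monic (g : ℕ → Polynomial ℂ) :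
    ∀ (n : ℕ), (∀ a < n, (g a).Monic) → (∀ a < n, (g a).natDegree = a) →
      ∀ R : Polynomial ℂ, R.degree < (n : ℕ) →
        ∃ t : ℕ → ℂ, ∑ a ∈ Finset.range n, Polynomial.C (t a) * g a = R := by
  intro n
  induction n with
  | zero =>
    intro _ _ R hR
    refine ⟨fun _ => 0, ?_⟩
    have hR0 : R = 0 := by
      by_contra h0
      exact absurd (Polynomial.zero_le_degree_iff.2 h0) (not_le.2 (by simpa using hR))
    simp [hR0]
  | succ n ih =>
    intro hmon hdeg R hR
    set cR := R.coeff n with hcR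
    set R' := R - Polynomial.C cR * g n with hR'def
    have hgn : (g n).Monic := hmon n (Nat.lt_succ_self n)
    have hgnd : (g n).natDegree = n := hdeg n (Nat.lt_succ_self n)
    have hR' : R'.degree < (n : ℕ) := by
      rw [Polynomial.degree_lt_iff_coeff_zero]
      intro m hm
      rcases eq_or_lt_of_le hm with h | h
      · have h1 : (g n).coeff n = 1 := by
          have := hgn.coeff_natDegree
          rwa [hgnd] at this
        simp [hR'def, ← h, h1, hcR]
      · have h2 : R.coeff m = 0 := by
          refine (Polynomial.degree_lt_iff_coeff_zero R (n+1)).1 ?_ m (by omega)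
          exact_mod_cast hR
        have h3 : (g n).coeff m = 0 :=
          Polynomial.coeff_eq_zero_of_natDegree_lt (by omega)
        simp [hR'def, h2, h3]
    obtain ⟨t', ht'⟩ := ih (fun a ha => hmon a (by omega)) (fun a ha => hdeg a (by omega)) R' hR'
    refine ⟨fun a => if a = n then cR else t' a, ?_⟩
    rw [Finset.sum_range_succ]
    have : ∑ a ∈ Finset.range n, Polynomial.C (if a = n then cR else t' a) * g a
        = ∑ a ∈ Finset.range n, Polynomial.C (t' a) * g a := by
      refine Finset.sum_congr rfl fun a ha => ?_
      rw [Finset.mem_range] at ha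
      simp [Nat.ne_of_lt ha]
    rw [this, ht']
    simp [hR'def]

/-- the polynomial-solving step -/
lemma poly_solve (n iv : ℕ) (hn : 2 ≤ n) (hin : iv ≤ n - 1) (P Q : Polynomial ℂ)
    (hPm : P.Monic) (hQm : Q.Monic) (hPd : P.natDegree = iv) (hQd : Q.natDegree = n - 1 - iv)
    (hcop : IsCoprime P Q) :
    ∃ (xi : ℂ) (RR SS : Polynomial ℂ), RR.degree < (iv : ℕ) ∧ SS.degree < ((n - 1 - iv : ℕ) : ℕ) ∧
      (X + C xi) * P * Q - RR * Q - SS * P = X ^ n := by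
  have hDm : (P * Q).Monic := hPm.mul hQm
  have hDd : (P * Q).natDegree = n - 1 := by
    rw [hPm.natDegree_mul hQm, hPd, hQd]; omega
  set ρ := (X ^ n : Polynomial ℂ) %ₘ (P * Q) with hρdef
  set g := (X ^ n : Polynomial ℂ) /ₘ (P * Q) with hgdef
  have hdiv : ρ + (P * Q) * g = X ^ n := Polynomial.modByMonic_add_div _ _
  have hρlt : ρ.degree < ((n - 1 : ℕ) : WithBot ℕ) := by
    have := Polynomial.degree_modByMonic_lt (X ^ n : Polynomial ℂ) hDm
    rwa [Polynomial.degree_eq_natDegree hDm.ne_zero, hDd] at this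
  have hglt : g.natDegree = 1 := by
    rw [hgdef, Polynomial.natDegree_divByMonic _ hDm, Polynomial.natDegree_X_pow, hDd]; omega
  have hgne : g ≠ 0 := fun h => by simp [h] at hglt
  have hXρ : ((X : Polynomial ℂ) ^ n - ρ).degree = (n : ℕ) := by
    rw [Polynomial.degree_sub_eq_left_of_degree_lt, Polynomial.degree_X_pow]
    rw [Polynomial.degree_X_pow]
    exact lt_of_lt_of_le hρlt (by exact_mod_cast Nat.sub_le n 1)
  have hgm : g.Monic := by
    have h1 : (P * Q) * g = X ^ n - ρ := by linear_combination hdiv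
    have hnat : ((X : Polynomial ℂ) ^ n - ρ).natDegree = n :=
      Polynomial.natDegree_eq_of_degree_eq_some hXρ
    have h2 : ((P * Q) * g).leadingCoeff = 1 := by
      rw [h1, Polynomial.leadingCoeff, hnat, Polynomial.coeff_sub, Polynomial.coeff_X_pow,
        if_pos rfl, Polynomial.coeff_eq_zero_of_degree_lt, sub_zero]
      exact lt_of_lt_of_le hρlt (by exact_mod_cast Nat.sub_le n 1)
    rw [Polynomial.leadingCoeff_mul, hDm.leadingCoeff, one_mul] at h2
    exact h2
  have hgX : g = X + C (g.coeff 0) := hgm.eq_X_add_C hglt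
  obtain ⟨u, v, huv⟩ := hcop
  set S0 := (-ρ) * u with hS0def
  set SS := S0 %ₘ Q with hSSdef
  set qq := S0 /ₘ Q with hqqdef
  have hS : SS + Q * qq = S0 := Polynomial.modByMonic_add_div _ _
  set RR := qq * P + (-ρ) * v with hRRdef
  have hmain : RR * Q + SS * P = -ρ := by
    have h1 : SS = S0 - Q * qq := by linear_combination hS
    calc RR * Q + SS * P = (-ρ) * (u * P + v * Q) + (qq * P * Q + (S0 - (-ρ) * u - Q * qq) * P) := by
          rw [h1, hS0def]; ring
      _ = -ρ := by rw [huv, hS0def]; ring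
  have hSSlt : SS.degree < ((n - 1 - iv : ℕ) : WithBot ℕ) := by
    have := Polynomial.degree_modByMonic_lt S0 hQm
    rwa [Polynomial.degree_eq_natDegree hQm.ne_zero, hQd] at this
  have hRRlt : RR.degree < (iv : ℕ) := by
    rcases eq_or_ne RR 0 with h | h
    · rw [h, Polynomial.degree_zero]
      exact WithBot.bot_lt_coe _
    have hRQ : RR * Q = -ρ - SS * P := by linear_combination hmain
    have hSP : (SS * P).degree < ((n - 1 : ℕ) : WithBot ℕ) := by
      rcases eq_or_ne SS 0 with h' | h'
      · rw [h', zero_mul, Polynomial.degree_zero]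
        exact WithBot.bot_lt_coe _
      · rw [Polynomial.degree_mul, Polynomial.degree_eq_natDegree h',
          Polynomial.degree_eq_natDegree hPm.ne_zero, hPd]
        have hSn : SS.natDegree < n - 1 - iv := by
          have := hSSlt
          rwa [Polynomial.degree_eq_natDegree h', Nat.cast_lt] at this
        exact_mod_cast (by omega : SS.natDegree + iv < n - 1)
    have hRQlt : (RR * Q).degree < ((n - 1 : ℕ) : WithBot ℕ) := by
      rw [hRQ]
      refine lt_of_le_of_lt (Polynomial.degree_sub_le _ _) (max_lt ?_ hSP)
      rwa [Polynomial.degree_neg]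
    rw [Polynomial.degree_mul, Polynomial.degree_eq_natDegree h,
      Polynomial.degree_eq_natDegree hQm.ne_zero, hQd] at hRQlt
    have : RR.natDegree + (n - 1 - iv) < n - 1 := by exact_mod_cast hRQlt
    rw [Polynomial.degree_eq_natDegree h]
    exact_mod_cast (by omega : RR.natDegree < iv)
  refine ⟨g.coeff 0, RR, SS, hRRlt, hSSlt, ?_⟩
  rw [← hgX]
  linear_combination hdiv - hmain


lemma det_eq_eval_charpoly {N : ℕ} (A : Matrix (Fin N) (Fin N) ℂ) (lam : ℂ) :
    (lam • (1 : Matrix (Fin N) (Fin N) ℂ) + A).det = ((-A).charpoly).eval lam := by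
  rw [Matrix.charpoly, ← Polynomial.coe_evalRingHom, RingHom.map_det]
  congr 1
  ext p q
  by_cases hpq : p = q
  · subst hpq
    simp [Matrix.charmatrix_apply_eq, Matrix.add_apply, Matrix.smul_apply, Matrix.one_apply,
      Matrix.map_apply]
  · simp [Matrix.charmatrix_apply_ne _ _ _ hpq, hpq, Matrix.map_apply, Matrix.add_apply,
      Matrix.smul_apply, Matrix.one_apply]


/-- Lemma 5.6: given `x_j` (`j ≠ i`) with `x_j ≠ x_{j'}` whenever `j < i < j'`, there exist a
value `xᵢ` for the remaining diagonal entry and `y₁, …, y_{N-1}` such that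
`det(λ I_N + X) = λ^N`, i.e. `X` is nilpotent with characteristic polynomial `λ^N`. -/
theorem stmt_1 (N : ℕ) (hN : 1 < N) (i : Fin N) (x : Fin N → ℂ)
    (hx : ∀ j j' : Fin N, j < i → i < j' → x j ≠ x j') :
    ∃ xi : ℂ, ∃ y : ℕ → ℂ, ∀ lam : ℂ,
      (lam • (1 : Matrix (Fin N) (Fin N) ℂ) + hypMat N i (Function.update x i xi) y).det =
        lam ^ N := by
  classical
  have hiN := i.isLt
  set ii := (i : ℕ) with hii
  set xx : ℕ → ℂ := fun k => if h : k < N then x ⟨k, h⟩ else 1 with hxx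
  set P : Polynomial ℂ := ∏ k ∈ Finset.range ii, (X + C (xx k)) with hP
  set Q : Polynomial ℂ := ∏ k ∈ Finset.Ico (ii + 1) N, (X + C (xx k)) with hQ
  have hPm : P.Monic := monic_prod_of_monic _ _ fun k _ => monic_X_add_C _
  have hQm : Q.Monic := monic_prod_of_monic _ _ fun k _ => monic_X_add_C _
  have hPd : P.natDegree = ii := by
    rw [hP, natDegree_prod_of_monic _ _ fun k _ => monic_X_add_C _]
    simp
  have hQd : Q.natDegree = N - 1 - ii := by
    rw [hQ, natDegree_prod_of_monic _ _ fun k _ => monic_X_add_C _]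
    simp [Nat.card_Ico]
    omega
  have hcop : IsCoprime P Q := by
    rw [hP, hQ]
    apply IsCoprime.prod_left
    intro a ha
    apply IsCoprime.prod_right
    intro b hb
    rw [Finset.mem_range] at ha
    rw [Finset.mem_Ico] at hb
    have hne : xx a ≠ xx b := by
      rw [hxx]
      simp only
      rw [dif_pos (by omega : a < N), dif_pos hb.2]
      exact hx ⟨a, by omega⟩ ⟨b, hb.2⟩ (Fin.lt_def.mpr (by simpa using ha))
        (Fin.lt_def.mpr (by simpa using hb.1))
    have hsub : xx b - xx a ≠ 0 := sub_ne_zero.mpr (Ne.symm hne)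
    refine ⟨-C ((xx b - xx a)⁻¹), C ((xx b - xx a)⁻¹), ?_⟩
    have hc : -C ((xx b - xx a)⁻¹) * (X + C (xx a)) + C ((xx b - xx a)⁻¹) * (X + C (xx b))
        = C ((xx b - xx a)⁻¹ * (xx b - xx a)) := by
      rw [C_mul, C_sub]
      ring
    rw [hc, inv_mul_cancel₀ hsub, C_1]
  obtain ⟨xi, RR, SS, hRRlt, hSSlt, hsolve⟩ :=
    poly_solve N ii (by omega) (by omega) P Q hPm hQm hPd hQd hcop
  obtain ⟨t, ht⟩ := span_monic (fun a => ∏ k ∈ Finset.range a, (X + C (xx k))) ii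
    (fun a _ => monic_prod_of_monic _ _ fun k _ => monic_X_add_C _)
    (fun a _ => by
      rw [natDegree_prod_of_monic _ _ fun k _ => monic_X_add_C _]
      simp)
    RR hRRlt
  obtain ⟨t', ht'⟩ := span_monic (fun m => ∏ k ∈ Finset.Ico (N - m) N, (X + C (xx k)))
    (N - 1 - ii)
    (fun m _ => monic_prod_of_monic _ _ fun k _ => monic_X_add_C _)
    (fun m hm => by
      rw [natDegree_prod_of_monic _ _ fun k _ => monic_X_add_C _]
      simp [Nat.card_Ico]
      omega)
    SS hSSlt
  set y : ℕ → ℂ := fun m =>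
    if m < ii then (-1 : ℂ) ^ (ii - 1 - m) * t m else (-1 : ℂ) ^ (m - ii) * t' (N - 2 - m)
    with hy
  refine ⟨xi, y, ?_⟩
  set x' : Fin N → ℂ := Function.update x i xi with hx'
  have hxk : ∀ (k : ℕ) (h : k < N), k ≠ ii → x' ⟨k, h⟩ = xx k := by
    intro k h hk
    rw [hx', Function.update_of_ne (fun hc => hk (congrArg Fin.val hc)), hxx]
    simp only
    rw [dif_pos h]
  have key : ((-(hypMat N i x' y)).charpoly) = X ^ N := by
    apply Polynomial.eq_of_infinite_eval_eq
    have hsub : {lam : ℂ | ∀ k : Fin N, k ≠ i → lam + x' k ≠ 0} ⊆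
        {lam : ℂ | Polynomial.eval lam ((-(hypMat N i x' y)).charpoly)
          = Polynomial.eval lam ((X : Polynomial ℂ) ^ N)} := by
      intro lam hlam
      simp only [Set.mem_setOf_eq] at hlam ⊢
      rw [← det_eq_eval_charpoly, det_formula N x' lam y i hlam]
      have e1 : dd N x' lam ii = Polynomial.eval lam (X + C xi) := by
        rw [dd_lt N x' lam (show ii < N from hiN)]
        have : (⟨ii, hiN⟩ : Fin N) = i := Fin.ext rfl
        rw [this, hx', Function.update_self]
        simp
      have e2 : Dlt N x' lam ii = Polynomial.eval lam P := by
        rw [Dlt, hP, Polynomial.eval_prod]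
        refine Finset.prod_congr rfl fun k hk => ?_
        rw [Finset.mem_range] at hk
        rw [dd_lt N x' lam (by omega : k < N), hxk k (by omega) (by omega)]
        simp
      have e3 : Dgt N x' lam ii = Polynomial.eval lam Q := by
        rw [Dgt, hQ, Polynomial.eval_prod]
        refine Finset.prod_congr rfl fun k hk => ?_
        rw [Finset.mem_Ico] at hk
        rw [dd_lt N x' lam (by omega : k < N), hxk k (by omega) (by omega)]
        simp
      have e4 : ∑ a ∈ Finset.range ii, (-1 : ℂ) ^ (ii - 1 - a) * y a * Dlt N x' lam a
          = Polynomial.eval lam RR := by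
        rw [← ht, Polynomial.eval_finset_sum]
        refine Finset.sum_congr rfl fun a ha => ?_
        rw [Finset.mem_range] at ha
        have hDa : Dlt N x' lam a
            = Polynomial.eval lam (∏ k ∈ Finset.range a, (X + C (xx k))) := by
          rw [Dlt, Polynomial.eval_prod]
          refine Finset.prod_congr rfl fun k hk => ?_
          rw [Finset.mem_range] at hk
          rw [dd_lt N x' lam (by omega : k < N), hxk k (by omega) (by omega)]
          simp
        have hya : y a = (-1 : ℂ) ^ (ii - 1 - a) * t a := by
          rw [hy]
          simp only
          rw [if_pos ha]
        rw [hya, hDa, Polynomial.eval_mul, Polynomial.eval_C,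
          show ((-1 : ℂ) ^ (ii - 1 - a) * ((-1 : ℂ) ^ (ii - 1 - a) * t a)) = t a by
            rw [← mul_assoc, ← mul_pow]; norm_num]
      have e5 : ∑ b ∈ Finset.Ico (ii + 1) N, (-1 : ℂ) ^ (b - (ii + 1)) * y (b - 1)
            * Dgt N x' lam b
          = Polynomial.eval lam SS := by
        rw [← ht', Polynomial.eval_finset_sum, Finset.sum_Ico_eq_sum_range,
          show N - (ii + 1) = N - 1 - ii by omega,
          ← Finset.sum_range_reflect _ (N - 1 - ii)]
        refine Finset.sum_congr rfl fun j hj => ?_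
        rw [Finset.mem_range] at hj
        have h1 : ii + 1 + (N - 1 - ii - 1 - j) - (ii + 1) = N - 2 - ii - j := by omega
        have h2 : ii + 1 + (N - 1 - ii - 1 - j) - 1 = N - 2 - j := by omega
        have h3 : ii + 1 + (N - 1 - ii - 1 - j) = N - 1 - j := by omega
        have hyb : y (N - 2 - j) = (-1 : ℂ) ^ (N - 2 - ii - j) * t' j := by
          rw [hy]
          simp only
          rw [if_neg (by omega)]
          congr 1
          · congr 1
            omega
          · congr 1
            omega
        have hDb : Dgt N x' lam (N - 1 - j)
            = Polynomial.eval lam (∏ k ∈ Finset.Ico (N - j) N, (X + C (xx k))) := by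
          rw [Dgt, show N - 1 - j + 1 = N - j by omega, Polynomial.eval_prod]
          refine Finset.prod_congr rfl fun k hk => ?_
          rw [Finset.mem_Ico] at hk
          rw [dd_lt N x' lam (by omega : k < N), hxk k (by omega) (by omega)]
          simp
        rw [h1, h2, h3, hyb, hDb, Polynomial.eval_mul, Polynomial.eval_C,
          show ((-1 : ℂ) ^ (N - 2 - ii - j) * ((-1 : ℂ) ^ (N - 2 - ii - j) * t' j)) = t' j by
            rw [← mul_assoc, ← mul_pow]; norm_num]
      rw [e1, e2, e3, e4, e5, ← hsolve]
      simp [Polynomial.eval_mul, Polynomial.eval_sub]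
    refine Set.Infinite.mono hsub ?_
    have hfin : (Set.range (fun k : Fin N => -x' k)).Finite := Set.finite_range _
    refine Set.Infinite.mono ?_ hfin.infinite_compl
    intro lam hlam k hk h0
    exact hlam ⟨k, by linear_combination -h0⟩
  intro lam
  rw [det_eq_eval_charpoly, key]
  simp
end

section
/- Let $G$ be of type $A_n$ or $C_n$, $M$ the admissible Levi with $\Delta_M = \{\alpha_{n-m+1},\dots,\alpha_n\}$ and $d = h_M$. Let $\pi$ be the projection of a root to its $\Delta_M^c$-part (i.e. $\pi(\sum_{\alpha\in\Delta_G} n_\alpha \alpha) = \sum_{\alpha\in\Delta_M^c} n_\alpha \alpha$). Then $\pi$ restricted to $\Phi(\mathfrak{u}_0) = \{\gamma \in \Phi_G^+ : d \mid \mathrm{Ht}(\gamma)\}$ is injective. -/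
/-- The fundamental character `χᵢ`, realized in `ℤ^N`. -/
def chiV (N : ℕ) (i : Fin N) : Fin N → ℤ := Pi.single i 1

/-- Positive roots of type `Aₙ` (in `ℤ^{n+1}`). -/
def posA (n : ℕ) : Set (Fin (n + 1) → ℤ) :=
  {v | ∃ i j : Fin (n + 1), i < j ∧ v = chiV (n + 1) i - chiV (n + 1) j}

/-- Positive roots of type `Cₙ`. -/
def posC (n : ℕ) : Set (Fin n → ℤ) :=
  {v | ∃ i j : Fin n, (i < j ∧ v = chiV n i - chiV n j) ∨ (i ≤ j ∧ v = chiV n i + chiV n j)}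

/-- The height functional in type `Aₙ`. -/
def htA (n : ℕ) (v : Fin (n + 1) → ℤ) : ℤ := ∑ l : Fin (n + 1), ((n : ℤ) - (l : ℕ)) * v l

/-- Twice the height functional in type `Cₙ`. -/
def htC2 (n : ℕ) (v : Fin n → ℤ) : ℤ := ∑ l : Fin n, (2 * (n : ℤ) - 2 * (l : ℕ) - 1) * v l

/-- The coefficient of `v` at the simple root `α_l` (0-indexed): the partial sum `∑_{j ≤ l} v j`. -/
def psum (N : ℕ) (v : Fin N → ℤ) (l : Fin N) : ℤ :=
  ∑ j ∈ Finset.univ.filter (· ≤ l), v j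

lemma sum_mul_chi {N : ℕ} (c : Fin N → ℤ) (i : Fin N) :
    ∑ l, c l * chiV N i l = c i := by
  simp [chiV, Pi.single_apply]

lemma psum_chi {N : ℕ} (i l : Fin N) :
    psum N (chiV N i) l = if (i:ℕ) ≤ (l:ℕ) then 1 else 0 := by
  unfold psum chiV
  rw [Finset.sum_pi_single']
  simp only [Finset.mem_filter, Finset.mem_univ, true_and]
  by_cases h : i ≤ l
  · rw [if_pos h, if_pos (Fin.le_def.mp h)]
  · rw [if_neg h, if_neg (fun hh => h (Fin.le_def.mpr hh))]

lemma psum_sub {N : ℕ} (i j l : Fin N) :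
    psum N (chiV N i - chiV N j) l =
      (if (i:ℕ) ≤ (l:ℕ) then 1 else 0) - (if (j:ℕ) ≤ (l:ℕ) then 1 else 0) := by
  simp only [psum, Pi.sub_apply, Finset.sum_sub_distrib]
  rw [← psum, ← psum, psum_chi, psum_chi]

lemma psum_add {N : ℕ} (i j l : Fin N) :
    psum N (chiV N i + chiV N j) l =
      (if (i:ℕ) ≤ (l:ℕ) then 1 else 0) + (if (j:ℕ) ≤ (l:ℕ) then 1 else 0) := by
  simp only [psum, Pi.add_apply, Finset.sum_add_distrib]
  rw [← psum, ← psum, psum_chi, psum_chi]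

lemma htA_sub (n : ℕ) (i j : Fin (n+1)) :
    htA n (chiV (n+1) i - chiV (n+1) j) = (j:ℤ) - (i:ℤ) := by
  simp only [htA, Pi.sub_apply, mul_sub, Finset.sum_sub_distrib, sum_mul_chi]
  ring

lemma htC2_sub (n : ℕ) (i j : Fin n) :
    htC2 n (chiV n i - chiV n j) = 2*(j:ℤ) - 2*(i:ℤ) := by
  simp only [htC2, Pi.sub_apply, mul_sub, Finset.sum_sub_distrib, sum_mul_chi]
  ring

lemma htC2_add (n : ℕ) (i j : Fin n) :
    htC2 n (chiV n i + chiV n j) = (2*(n:ℤ) - 2*(i:ℤ) - 1) + (2*(n:ℤ) - 2*(j:ℤ) - 1) := by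
  simp only [htC2, Pi.add_apply, mul_add, Finset.sum_add_distrib, sum_mul_chi]

/-- In types `A` and `C`, the projection `π` to the `Δ_M^c`-part (the coefficients at the
simple roots `α_l`, `l < n-m` 0-indexed) is injective on
`Φ(𝔲₀) = {γ ∈ Φ⁺ : d ∣ Ht(γ)}`, where `d = h_M` (`= m+1` in type A, `= 2m` in type C). -/
theorem stmt_9 (n m : ℕ) (hm : 1 ≤ m) (hmn : m ≤ n) :
    (∀ γ₁ ∈ posA n, ∀ γ₂ ∈ posA n,
      ((m : ℤ) + 1) ∣ htA n γ₁ → ((m : ℤ) + 1) ∣ htA n γ₂ →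
      (∀ l : Fin (n + 1), (l : ℕ) < n - m → psum (n + 1) γ₁ l = psum (n + 1) γ₂ l) →
      γ₁ = γ₂) ∧
    (∀ γ₁ ∈ posC n, ∀ γ₂ ∈ posC n,
      (2 * (2 * (m : ℤ))) ∣ htC2 n γ₁ → (2 * (2 * (m : ℤ))) ∣ htC2 n γ₂ →
      (∀ l : Fin n, (l : ℕ) < n - m → psum n γ₁ l = psum n γ₂ l) →
      γ₁ = γ₂) := by
  constructor
  · -- type A
    rintro γ₁ ⟨i₁, j₁, h₁, rfl⟩ γ₂ ⟨i₂, j₂, h₂, rfl⟩ d₁ d₂ hp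
    rw [htA_sub] at d₁ d₂
    simp only [psum_sub] at hp
    have h₁' : (i₁:ℕ) < (j₁:ℕ) := Fin.lt_def.mp h₁
    have h₂' : (i₂:ℕ) < (j₂:ℕ) := Fin.lt_def.mp h₂
    have hj₁n : (j₁:ℕ) < n + 1 := j₁.isLt
    have hj₂n : (j₂:ℕ) < n + 1 := j₂.isLt
    have hd₁ : (m:ℤ) + 1 ≤ (j₁:ℤ) - (i₁:ℤ) := Int.le_of_dvd (by omega) d₁
    have hd₂ : (m:ℤ) + 1 ≤ (j₂:ℤ) - (i₂:ℤ) := Int.le_of_dvd (by omega) d₂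
    have hi₁ : (i₁:ℕ) < n - m := by omega
    have hi₂ : (i₂:ℕ) < n - m := by omega
    have hii : (i₁:ℕ) = (i₂:ℕ) := by
      rcases Nat.lt_trichotomy (i₁:ℕ) (i₂:ℕ) with h | h | h
      · have := hp i₁ hi₁; split_ifs at this <;> omega
      · exact h
      · have := hp i₂ hi₂; split_ifs at this <;> omega
    have hjj : (j₁:ℕ) = (j₂:ℕ) := by
      rcases Nat.lt_trichotomy (j₁:ℕ) (j₂:ℕ) with h | h | h
      · by_cases hc : (j₁:ℕ) < n - m
        · have := hp j₁ hc; split_ifs at this <;> omega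
        · have hD : (m:ℤ) + 1 ≤ ((j₂:ℤ) - (i₂:ℤ)) - ((j₁:ℤ) - (i₁:ℤ)) :=
            Int.le_of_dvd (by omega) (dvd_sub d₂ d₁)
          omega
      · exact h
      · by_cases hc : (j₂:ℕ) < n - m
        · have := hp j₂ hc; split_ifs at this <;> omega
        · have hD : (m:ℤ) + 1 ≤ ((j₁:ℤ) - (i₁:ℤ)) - ((j₂:ℤ) - (i₂:ℤ)) :=
            Int.le_of_dvd (by omega) (dvd_sub d₁ d₂)
          omega
    rw [Fin.ext hii, Fin.ext hjj]
  · -- type C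
    rintro γ₁ ⟨i₁, j₁, ⟨h₁, rfl⟩ | ⟨h₁, rfl⟩⟩ γ₂ ⟨i₂, j₂, ⟨h₂, rfl⟩ | ⟨h₂, rfl⟩⟩ d₁ d₂ hp
    · -- minus, minus
      rw [htC2_sub] at d₁ d₂
      simp only [psum_sub] at hp
      have h₁' : (i₁:ℕ) < (j₁:ℕ) := Fin.lt_def.mp h₁
      have h₂' : (i₂:ℕ) < (j₂:ℕ) := Fin.lt_def.mp h₂
      have hj₁n : (j₁:ℕ) < n := j₁.isLt
      have hj₂n : (j₂:ℕ) < n := j₂.isLt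
      have hd₁ : 2 * (2 * (m:ℤ)) ≤ 2*(j₁:ℤ) - 2*(i₁:ℤ) := Int.le_of_dvd (by omega) d₁
      have hd₂ : 2 * (2 * (m:ℤ)) ≤ 2*(j₂:ℤ) - 2*(i₂:ℤ) := Int.le_of_dvd (by omega) d₂
      have hi₁ : (i₁:ℕ) < n - m := by omega
      have hi₂ : (i₂:ℕ) < n - m := by omega
      have hii : (i₁:ℕ) = (i₂:ℕ) := by
        rcases Nat.lt_trichotomy (i₁:ℕ) (i₂:ℕ) with h | h | h
        · have := hp i₁ hi₁; split_ifs at this <;> omega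
        · exact h
        · have := hp i₂ hi₂; split_ifs at this <;> omega
      have hjj : (j₁:ℕ) = (j₂:ℕ) := by
        rcases Nat.lt_trichotomy (j₁:ℕ) (j₂:ℕ) with h | h | h
        · by_cases hc : (j₁:ℕ) < n - m
          · have := hp j₁ hc; split_ifs at this <;> omega
          · have hD : 2 * (2 * (m:ℤ)) ≤ (2*(j₂:ℤ) - 2*(i₂:ℤ)) - (2*(j₁:ℤ) - 2*(i₁:ℤ)) :=
              Int.le_of_dvd (by omega) (dvd_sub d₂ d₁)
            omega
        · exact h
        · by_cases hc : (j₂:ℕ) < n - m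
          · have := hp j₂ hc; split_ifs at this <;> omega
          · have hD : 2 * (2 * (m:ℤ)) ≤ (2*(j₁:ℤ) - 2*(i₁:ℤ)) - (2*(j₂:ℤ) - 2*(i₂:ℤ)) :=
              Int.le_of_dvd (by omega) (dvd_sub d₁ d₂)
            omega
      rw [Fin.ext hii, Fin.ext hjj]
    · -- minus, plus : impossible
      exfalso
      rw [htC2_sub] at d₁
      rw [htC2_add] at d₂
      simp only [psum_sub, psum_add] at hp
      have h₁' : (i₁:ℕ) < (j₁:ℕ) := Fin.lt_def.mp h₁
      have h₂' : (i₂:ℕ) ≤ (j₂:ℕ) := Fin.le_def.mp h₂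
      have hj₁n : (j₁:ℕ) < n := j₁.isLt
      have hj₂n : (j₂:ℕ) < n := j₂.isLt
      have hd₁ : 2 * (2 * (m:ℤ)) ≤ 2*(j₁:ℤ) - 2*(i₁:ℤ) := Int.le_of_dvd (by omega) d₁
      have hd₂ : 2 * (2 * (m:ℤ)) ≤ (2*(n:ℤ) - 2*(i₂:ℤ) - 1) + (2*(n:ℤ) - 2*(j₂:ℤ) - 1) :=
        Int.le_of_dvd (by omega) d₂
      have hi₁ : (i₁:ℕ) < n - m := by omega
      have hi₂ : (i₂:ℕ) < n - m := by omega
      have hii : (i₁:ℕ) = (i₂:ℕ) := by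
        rcases Nat.lt_trichotomy (i₁:ℕ) (i₂:ℕ) with h | h | h
        · have := hp i₁ hi₁; split_ifs at this <;> omega
        · exact h
        · have := hp i₂ hi₂; split_ifs at this <;> omega
      by_cases hc₁ : (j₁:ℕ) < n - m
      · have := hp j₁ hc₁; split_ifs at this <;> omega
      by_cases hc₂ : (j₂:ℕ) < n - m
      · have := hp j₂ hc₂; split_ifs at this <;> omega
      have hD : 2 * (2 * (m:ℤ)) ≤
          ((2*(n:ℤ) - 2*(i₂:ℤ) - 1) + (2*(n:ℤ) - 2*(j₂:ℤ) - 1)) - (2*(j₁:ℤ) - 2*(i₁:ℤ)) :=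
        Int.le_of_dvd (by omega) (dvd_sub d₂ d₁)
      omega
    · -- plus, minus : impossible
      exfalso
      rw [htC2_add] at d₁
      rw [htC2_sub] at d₂
      simp only [psum_sub, psum_add] at hp
      have h₁' : (i₁:ℕ) ≤ (j₁:ℕ) := Fin.le_def.mp h₁
      have h₂' : (i₂:ℕ) < (j₂:ℕ) := Fin.lt_def.mp h₂
      have hj₁n : (j₁:ℕ) < n := j₁.isLt
      have hj₂n : (j₂:ℕ) < n := j₂.isLt
      have hd₁ : 2 * (2 * (m:ℤ)) ≤ (2*(n:ℤ) - 2*(i₁:ℤ) - 1) + (2*(n:ℤ) - 2*(j₁:ℤ) - 1) :=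
        Int.le_of_dvd (by omega) d₁
      have hd₂ : 2 * (2 * (m:ℤ)) ≤ 2*(j₂:ℤ) - 2*(i₂:ℤ) := Int.le_of_dvd (by omega) d₂
      have hi₁ : (i₁:ℕ) < n - m := by omega
      have hi₂ : (i₂:ℕ) < n - m := by omega
      have hii : (i₁:ℕ) = (i₂:ℕ) := by
        rcases Nat.lt_trichotomy (i₁:ℕ) (i₂:ℕ) with h | h | h
        · have := hp i₁ hi₁; split_ifs at this <;> omega
        · exact h
        · have := hp i₂ hi₂; split_ifs at this <;> omega
      by_cases hc₂ : (j₂:ℕ) < n - m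
      · have := hp j₂ hc₂; split_ifs at this <;> omega
      by_cases hc₁ : (j₁:ℕ) < n - m
      · have := hp j₁ hc₁; split_ifs at this <;> omega
      have hD : 2 * (2 * (m:ℤ)) ≤
          ((2*(n:ℤ) - 2*(i₁:ℤ) - 1) + (2*(n:ℤ) - 2*(j₁:ℤ) - 1)) - (2*(j₂:ℤ) - 2*(i₂:ℤ)) :=
        Int.le_of_dvd (by omega) (dvd_sub d₁ d₂)
      omega
    · -- plus, plus
      rw [htC2_add] at d₁ d₂
      simp only [psum_add] at hp
      have h₁' : (i₁:ℕ) ≤ (j₁:ℕ) := Fin.le_def.mp h₁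
      have h₂' : (i₂:ℕ) ≤ (j₂:ℕ) := Fin.le_def.mp h₂
      have hj₁n : (j₁:ℕ) < n := j₁.isLt
      have hj₂n : (j₂:ℕ) < n := j₂.isLt
      have hd₁ : 2 * (2 * (m:ℤ)) ≤ (2*(n:ℤ) - 2*(i₁:ℤ) - 1) + (2*(n:ℤ) - 2*(j₁:ℤ) - 1) :=
        Int.le_of_dvd (by omega) d₁
      have hd₂ : 2 * (2 * (m:ℤ)) ≤ (2*(n:ℤ) - 2*(i₂:ℤ) - 1) + (2*(n:ℤ) - 2*(j₂:ℤ) - 1) :=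
        Int.le_of_dvd (by omega) d₂
      have hi₁ : (i₁:ℕ) < n - m := by omega
      have hi₂ : (i₂:ℕ) < n - m := by omega
      have hii : (i₁:ℕ) = (i₂:ℕ) := by
        rcases Nat.lt_trichotomy (i₁:ℕ) (i₂:ℕ) with h | h | h
        · have := hp i₁ hi₁; split_ifs at this <;> omega
        · exact h
        · have := hp i₂ hi₂; split_ifs at this <;> omega
      have hjj : (j₁:ℕ) = (j₂:ℕ) := by
        rcases Nat.lt_trichotomy (j₁:ℕ) (j₂:ℕ) with h | h | h
        · by_cases hc : (j₁:ℕ) < n - m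
          · have := hp j₁ hc; split_ifs at this <;> omega
          · have hD : 2 * (2 * (m:ℤ)) ≤
                ((2*(n:ℤ) - 2*(i₁:ℤ) - 1) + (2*(n:ℤ) - 2*(j₁:ℤ) - 1)) -
                ((2*(n:ℤ) - 2*(i₂:ℤ) - 1) + (2*(n:ℤ) - 2*(j₂:ℤ) - 1)) :=
              Int.le_of_dvd (by omega) (dvd_sub d₁ d₂)
            omega
        · exact h
        · by_cases hc : (j₂:ℕ) < n - m
          · have := hp j₂ hc; split_ifs at this <;> omega
          · have hD : 2 * (2 * (m:ℤ)) ≤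
                ((2*(n:ℤ) - 2*(i₂:ℤ) - 1) + (2*(n:ℤ) - 2*(j₂:ℤ) - 1)) -
                ((2*(n:ℤ) - 2*(i₁:ℤ) - 1) + (2*(n:ℤ) - 2*(j₁:ℤ) - 1)) :=
              Int.le_of_dvd (by omega) (dvd_sub d₂ d₁)
            omega
      rw [Fin.ext hii, Fin.ext hjj]
end

section
/- Let $G$ be a classical group, $M$ an admissible Levi with Coxeter number $d = h_M$, and $\pi$ the projection of roots to their $\Delta_M^c$-part. If $\gamma_1, \gamma_2 \in \Phi(\mathfrak{u}_0) = \{\gamma \in \Phi_G^+ : d \mid \mathrm{Ht}(\gamma)\}$ satisfy $\pi(\gamma_1) = \pi(\gamma_2)$, then either $\mathrm{Ht}(\gamma_1) = \mathrm{Ht}(\gamma_2)$, or $G$ is of type B or D and $|\mathrm{Ht}(\gamma_1) - \mathrm{Ht}(\gamma_2)| = d$. -/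
/-- Positive roots of type `Bₙ`. -/
def posB (n : ℕ) : Set (Fin n → ℤ) :=
  {v | (∃ i : Fin n, v = chiV n i) ∨
    ∃ i j : Fin n, i < j ∧ (v = chiV n i - chiV n j ∨ v = chiV n i + chiV n j)}

/-- Positive roots of type `Dₙ`. -/
def posD (n : ℕ) : Set (Fin n → ℤ) :=
  {v | ∃ i j : Fin n, i < j ∧ (v = chiV n i - chiV n j ∨ v = chiV n i + chiV n j)}

/-- The height functional in type `Bₙ`. -/
def htB (n : ℕ) (v : Fin n → ℤ) : ℤ := ∑ l : Fin n, ((n : ℤ) - (l : ℕ)) * v l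

/-- The height functional in type `Dₙ`. -/
def htD (n : ℕ) (v : Fin n → ℤ) : ℤ := ∑ l : Fin n, ((n : ℤ) - 1 - (l : ℕ)) * v l

lemma sum_range_ite (M a : ℕ) (c : ℤ) :
    ∑ k ∈ Finset.range M, (if a ≤ k then c else 0) = ((M - a : ℕ) : ℤ) * c := by
  induction M with
  | zero => simp
  | succ M ih =>
    rw [Finset.sum_range_succ, ih]
    by_cases h : a ≤ M
    · rw [if_pos h]
      have h2 : M + 1 - a = (M - a) + 1 := by omega
      rw [h2]; push_cast; ring
    · rw [if_neg h]
      have h2 : M + 1 - a = 0 := by omega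
      have h3 : M - a = 0 := by omega
      rw [h2, h3]; simp

lemma tail_sum (N a : ℕ) (ha : a ≤ N - 1) (hN : 0 < N) (c₁ c₂ : ℤ) :
    ∑ k : Fin N, (if a ≤ (k : ℕ) then (if (k : ℕ) = N - 1 then c₁ else c₂) else 0)
      = ((N - 1 - a : ℕ) : ℤ) * c₂ + c₁ := by
  obtain ⟨M, rfl⟩ : ∃ M, N = M + 1 := ⟨N - 1, by omega⟩
  rw [Fin.sum_univ_eq_sum_range (fun k => if a ≤ k then (if k = M + 1 - 1 then c₁ else c₂) else 0)]
  rw [Finset.sum_range_succ]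
  simp only [Nat.add_sub_cancel] at ha ⊢
  rw [if_pos ha]; simp only [if_true]
  congr 1
  have h4 : ∑ x ∈ Finset.range M, (if a ≤ x then if x = M then c₁ else c₂ else 0)
      = ∑ x ∈ Finset.range M, (if a ≤ x then c₂ else 0) :=
    Finset.sum_congr rfl (fun k hk => by
      have hkM : k ≠ M := Nat.ne_of_lt (Finset.mem_range.mp hk)
      simp [hkM])
  rw [h4, sum_range_ite]

lemma abel (N : ℕ) (w v : Fin N → ℤ) :
    ∑ k, w k * psum N v k = ∑ l, (∑ k ∈ Finset.univ.filter (l ≤ ·), w k) * v l := by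
  simp only [psum, Finset.mul_sum, Finset.sum_mul, Finset.sum_filter, ite_mul, zero_mul,
    mul_ite, mul_zero]
  rw [Finset.sum_comm]

lemma coeff_eq (N : ℕ) (c₁ c₂ : ℤ) (l : Fin N) :
    ∑ k ∈ Finset.univ.filter (l ≤ ·), (if (k : ℕ) = N - 1 then c₁ else c₂)
      = ((N - 1 - (l : ℕ) : ℕ) : ℤ) * c₂ + c₁ := by
  rw [Finset.sum_filter]
  have h1 : ∀ k : Fin N, (l ≤ k) = ((l : ℕ) ≤ (k : ℕ)) := fun k => by rw [Fin.le_def]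
  simp only [h1]
  exact tail_sum N l (by omega) l.pos c₁ c₂

lemma ht_wgt (N : ℕ) (c₁ c₂ : ℤ) (v : Fin N → ℤ) :
    ∑ k : Fin N, (if (k : ℕ) = N - 1 then c₁ else c₂) * psum N v k
      = ∑ l : Fin N, (((N - 1 - (l : ℕ) : ℕ) : ℤ) * c₂ + c₁) * v l := by
  rw [abel]
  exact Finset.sum_congr rfl fun l _ => by rw [coeff_eq]

lemma key_bound (N a : ℕ) (c₁ c₂ c : ℤ) (h1 : 0 ≤ c₁) (h2 : 0 ≤ c₂) (ha : a ≤ N - 1)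
    (hN : 0 < N) (v₁ v₂ : Fin N → ℤ)
    (heq : ∀ l : Fin N, (l : ℕ) < a → psum N v₁ l = psum N v₂ l)
    (hb : ∀ l : Fin N, |psum N v₁ l - psum N v₂ l| ≤ c) :
    |(∑ k : Fin N, (if (k : ℕ) = N - 1 then c₁ else c₂) * psum N v₁ k)
      - ∑ k : Fin N, (if (k : ℕ) = N - 1 then c₁ else c₂) * psum N v₂ k|
      ≤ (((N - 1 - a : ℕ) : ℤ) * c₂ + c₁) * c := by
  set w : Fin N → ℤ := fun k => if (k : ℕ) = N - 1 then c₁ else c₂ with hw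
  have hwpos : ∀ k, 0 ≤ w k := fun k => by rw [hw]; dsimp only; split_ifs <;> assumption
  rw [← Finset.sum_sub_distrib]
  simp_rw [← mul_sub]
  calc |∑ k, w k * (psum N v₁ k - psum N v₂ k)|
      ≤ ∑ k, |w k * (psum N v₁ k - psum N v₂ k)| := Finset.abs_sum_le_sum_abs _ _
    _ ≤ ∑ k : Fin N, (if a ≤ (k : ℕ) then w k * c else 0) := by
        refine Finset.sum_le_sum fun k _ => ?_
        by_cases hk : a ≤ (k : ℕ)
        · rw [if_pos hk, abs_mul, abs_of_nonneg (hwpos k)]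
          exact mul_le_mul_of_nonneg_left (hb k) (hwpos k)
        · rw [if_neg hk, heq k (by omega), sub_self, mul_zero, abs_zero]
    _ = (((N - 1 - a : ℕ) : ℤ) * c₂ + c₁) * c := by
        simp_rw [hw, ite_mul]
        rw [tail_sum N a ha hN (c₁ * c) (c₂ * c)]
        ring

lemma dvd_abs_cases (d x : ℤ) (hd : 0 < d) (hdvd : d ∣ x) (hle : |x| ≤ d) :
    x = 0 ∨ |x| = d := by
  obtain ⟨c, rfl⟩ := hdvd
  rw [abs_mul, abs_of_pos hd] at hle ⊢
  have hc : |c| ≤ 1 := by nlinarith [abs_nonneg c]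
  obtain ⟨hc1, hc2⟩ := abs_le.mp hc
  interval_cases c
  · right; simp
  · left; ring
  · right; simp

lemma dvd_abs_zero (d x : ℤ) (hd : 0 < d) (hdvd : d ∣ x) (hlt : |x| < d) : x = 0 := by
  rcases dvd_abs_cases d x hd hdvd hlt.le with h | h
  · exact h
  · exact absurd h hlt.ne

lemma htA_eq (n : ℕ) (v : Fin (n + 1) → ℤ) :
    htA n v = ∑ k : Fin (n + 1), (if (k : ℕ) = (n + 1) - 1 then (0 : ℤ) else 1) * psum (n + 1) v k := by
  rw [ht_wgt]
  refine Finset.sum_congr rfl fun l _ => ?_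
  have hl : (l : ℕ) < n + 1 := l.isLt
  have h : (((n + 1) - 1 - (l : ℕ) : ℕ) : ℤ) = (n : ℤ) - (l : ℕ) := by omega
  rw [h]; ring

lemma htB_eq (n : ℕ) (v : Fin n → ℤ) :
    htB n v = ∑ k : Fin n, (if (k : ℕ) = n - 1 then (1 : ℤ) else 1) * psum n v k := by
  rw [ht_wgt]
  refine Finset.sum_congr rfl fun l _ => ?_
  have hl : (l : ℕ) < n := l.isLt
  have h : ((n - 1 - (l : ℕ) : ℕ) : ℤ) * 1 + 1 = (n : ℤ) - (l : ℕ) := by omega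
  rw [h]

lemma htC2_eq (n : ℕ) (v : Fin n → ℤ) :
    htC2 n v = ∑ k : Fin n, (if (k : ℕ) = n - 1 then (1 : ℤ) else 2) * psum n v k := by
  rw [ht_wgt]
  refine Finset.sum_congr rfl fun l _ => ?_
  have hl : (l : ℕ) < n := l.isLt
  have h : ((n - 1 - (l : ℕ) : ℕ) : ℤ) * 2 + 1 = 2 * (n : ℤ) - 2 * (l : ℕ) - 1 := by omega
  rw [h]

lemma htD_eq (n : ℕ) (v : Fin n → ℤ) :
    htD n v = ∑ k : Fin n, (if (k : ℕ) = n - 1 then (0 : ℤ) else 1) * psum n v k := by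
  rw [ht_wgt]
  refine Finset.sum_congr rfl fun l _ => ?_
  have hl : (l : ℕ) < n := l.isLt
  have h : ((n - 1 - (l : ℕ) : ℕ) : ℤ) * 1 + 0 = (n : ℤ) - 1 - (l : ℕ) := by omega
  rw [h]

lemma psum_sub_s10 (N : ℕ) (v w : Fin N → ℤ) (l : Fin N) :
    psum N (v - w) l = psum N v l - psum N w l := by
  simp [psum, Finset.sum_sub_distrib]

lemma psum_add_s10 (N : ℕ) (v w : Fin N → ℤ) (l : Fin N) :
    psum N (v + w) l = psum N v l + psum N w l := by
  simp [psum, Finset.sum_add_distrib]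

lemma psum_chiV (N : ℕ) (i l : Fin N) :
    psum N (chiV N i) l = if i ≤ l then 1 else 0 := by
  simp [psum, chiV, Pi.single_apply, Finset.sum_ite_eq']

lemma psum_single_bounds (N : ℕ) (i l : Fin N) :
    0 ≤ psum N (chiV N i) l ∧ psum N (chiV N i) l ≤ 1 := by
  rw [psum_chiV]; split_ifs <;> norm_num

lemma psum_diff_bounds (N : ℕ) (i j l : Fin N) (hij : i < j) :
    0 ≤ psum N (chiV N i - chiV N j) l ∧ psum N (chiV N i - chiV N j) l ≤ 1 := by
  rw [psum_sub_s10, psum_chiV, psum_chiV]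
  have hmono : j ≤ l → i ≤ l := fun h => le_trans hij.le h
  by_cases h2 : j ≤ l
  · rw [if_pos (hmono h2), if_pos h2]; norm_num
  · rw [if_neg h2]; split_ifs <;> norm_num

lemma psum_sum_bounds (N : ℕ) (i j l : Fin N) :
    0 ≤ psum N (chiV N i + chiV N j) l ∧ psum N (chiV N i + chiV N j) l ≤ 2 := by
  rw [psum_add_s10, psum_chiV, psum_chiV]
  split_ifs <;> norm_num

lemma posA_bounds (n : ℕ) (v : Fin (n + 1) → ℤ) (h : v ∈ posA n) (l : Fin (n + 1)) :
    0 ≤ psum (n + 1) v l ∧ psum (n + 1) v l ≤ 1 := by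
  obtain ⟨i, j, hij, rfl⟩ := h
  exact psum_diff_bounds _ i j l hij

lemma posB_bounds (n : ℕ) (v : Fin n → ℤ) (h : v ∈ posB n) (l : Fin n) :
    0 ≤ psum n v l ∧ psum n v l ≤ 2 := by
  rcases h with ⟨i, rfl⟩ | ⟨i, j, hij, rfl | rfl⟩
  · have := psum_single_bounds n i l; omega
  · have := psum_diff_bounds n i j l hij; omega
  · exact psum_sum_bounds n i j l

lemma posC_bounds (n : ℕ) (v : Fin n → ℤ) (h : v ∈ posC n) (l : Fin n) :
    0 ≤ psum n v l ∧ psum n v l ≤ 2 := by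
  rcases h with ⟨i, j, ⟨hij, rfl⟩ | ⟨hij, rfl⟩⟩
  · have := psum_diff_bounds n i j l hij; omega
  · exact psum_sum_bounds n i j l

lemma posD_bounds (n : ℕ) (v : Fin n → ℤ) (h : v ∈ posD n) (l : Fin n) :
    0 ≤ psum n v l ∧ psum n v l ≤ 2 := by
  rcases h with ⟨i, j, hij, rfl | rfl⟩
  · have := psum_diff_bounds n i j l hij; omega
  · exact psum_sum_bounds n i j l

/-- For a classical group with admissible Levi `M` and `d = h_M`: if `γ₁, γ₂ ∈ Φ(𝔲₀)`
(positive roots with `d ∣ Ht`) have the same projection to the `Δ_M^c`-part, then either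
`Ht(γ₁) = Ht(γ₂)` or (only possible in types `B` and `D`) `|Ht(γ₁) - Ht(γ₂)| = d`. -/
theorem stmt_10 (n m : ℕ) (hm : 1 ≤ m) (hmn : m ≤ n) :
    (∀ γ₁ ∈ posA n, ∀ γ₂ ∈ posA n,
      ((m : ℤ) + 1) ∣ htA n γ₁ → ((m : ℤ) + 1) ∣ htA n γ₂ →
      (∀ l : Fin (n + 1), (l : ℕ) < n - m → psum (n + 1) γ₁ l = psum (n + 1) γ₂ l) →
      htA n γ₁ = htA n γ₂) ∧
    (∀ γ₁ ∈ posB n, ∀ γ₂ ∈ posB n,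
      (2 * (m : ℤ)) ∣ htB n γ₁ → (2 * (m : ℤ)) ∣ htB n γ₂ →
      (∀ l : Fin n, (l : ℕ) < n - m → psum n γ₁ l = psum n γ₂ l) →
      htB n γ₁ = htB n γ₂ ∨ |htB n γ₁ - htB n γ₂| = 2 * (m : ℤ)) ∧
    (∀ γ₁ ∈ posC n, ∀ γ₂ ∈ posC n,
      (2 * (2 * (m : ℤ))) ∣ htC2 n γ₁ → (2 * (2 * (m : ℤ))) ∣ htC2 n γ₂ →
      (∀ l : Fin n, (l : ℕ) < n - m → psum n γ₁ l = psum n γ₂ l) →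
      htC2 n γ₁ = htC2 n γ₂) ∧
    (3 ≤ m → ∀ γ₁ ∈ posD n, ∀ γ₂ ∈ posD n,
      (2 * (m : ℤ) - 2) ∣ htD n γ₁ → (2 * (m : ℤ) - 2) ∣ htD n γ₂ →
      (∀ l : Fin n, (l : ℕ) < n - m → psum n γ₁ l = psum n γ₂ l) →
      htD n γ₁ = htD n γ₂ ∨ |htD n γ₁ - htD n γ₂| = 2 * (m : ℤ) - 2) := by
  refine ⟨?_, ?_, ?_, ?_⟩
  · -- Type A
    intro γ₁ h₁ γ₂ h₂ hd1 hd2 heq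
    have hb : ∀ l : Fin (n + 1), |psum (n + 1) γ₁ l - psum (n + 1) γ₂ l| ≤ 1 := fun l => by
      have u1 := posA_bounds n γ₁ h₁ l
      have u2 := posA_bounds n γ₂ h₂ l
      rw [abs_le]; omega
    have hx := key_bound (n + 1) (n - m) 0 1 1 (by norm_num) (by norm_num)
      (by omega) (by omega) γ₁ γ₂ heq hb
    rw [← htA_eq, ← htA_eq] at hx
    have hcoef : ((((n + 1) - 1 - (n - m) : ℕ) : ℤ) * 1 + 0) * 1 = (m : ℤ) := by omega
    rw [hcoef] at hx
    have hdvd : ((m : ℤ) + 1) ∣ (htA n γ₁ - htA n γ₂) := dvd_sub hd1 hd2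
    have h0 := dvd_abs_zero ((m : ℤ) + 1) _ (by positivity) hdvd (by omega)
    exact sub_eq_zero.mp h0
  · -- Type B
    intro γ₁ h₁ γ₂ h₂ hd1 hd2 heq
    have hb : ∀ l : Fin n, |psum n γ₁ l - psum n γ₂ l| ≤ 2 := fun l => by
      have u1 := posB_bounds n γ₁ h₁ l
      have u2 := posB_bounds n γ₂ h₂ l
      rw [abs_le]; omega
    have hx := key_bound n (n - m) 1 1 2 (by norm_num) (by norm_num)
      (by omega) (by omega) γ₁ γ₂ heq hb
    rw [← htB_eq, ← htB_eq] at hx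
    have hcoef : (((n - 1 - (n - m) : ℕ) : ℤ) * 1 + 1) * 2 = 2 * (m : ℤ) := by omega
    rw [hcoef] at hx
    have hdvd : (2 * (m : ℤ)) ∣ (htB n γ₁ - htB n γ₂) := dvd_sub hd1 hd2
    rcases dvd_abs_cases (2 * (m : ℤ)) _ (by omega) hdvd hx with h | h
    · exact Or.inl (sub_eq_zero.mp h)
    · exact Or.inr h
  · -- Type C
    intro γ₁ h₁ γ₂ h₂ hd1 hd2 heq
    have hb : ∀ l : Fin n, |psum n γ₁ l - psum n γ₂ l| ≤ 2 := fun l => by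
      have u1 := posC_bounds n γ₁ h₁ l
      have u2 := posC_bounds n γ₂ h₂ l
      rw [abs_le]; omega
    have hx := key_bound n (n - m) 1 2 2 (by norm_num) (by norm_num)
      (by omega) (by omega) γ₁ γ₂ heq hb
    rw [← htC2_eq, ← htC2_eq] at hx
    have hcoef : (((n - 1 - (n - m) : ℕ) : ℤ) * 2 + 1) * 2 = 4 * (m : ℤ) - 2 := by omega
    rw [hcoef] at hx
    have hdvd : (2 * (2 * (m : ℤ))) ∣ (htC2 n γ₁ - htC2 n γ₂) := dvd_sub hd1 hd2
    have h0 := dvd_abs_zero (2 * (2 * (m : ℤ))) _ (by omega) hdvd (by omega)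
    exact sub_eq_zero.mp h0
  · -- Type D
    intro hm3 γ₁ h₁ γ₂ h₂ hd1 hd2 heq
    have hb : ∀ l : Fin n, |psum n γ₁ l - psum n γ₂ l| ≤ 2 := fun l => by
      have u1 := posD_bounds n γ₁ h₁ l
      have u2 := posD_bounds n γ₂ h₂ l
      rw [abs_le]; omega
    have hx := key_bound n (n - m) 0 1 2 (by norm_num) (by norm_num)
      (by omega) (by omega) γ₁ γ₂ heq hb
    rw [← htD_eq, ← htD_eq] at hx
    have hcoef : (((n - 1 - (n - m) : ℕ) : ℤ) * 1 + 0) * 2 = 2 * (m : ℤ) - 2 := by omega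
    rw [hcoef] at hx
    have hdvd : (2 * (m : ℤ) - 2) ∣ (htD n γ₁ - htD n γ₂) := dvd_sub hd1 hd2
    rcases dvd_abs_cases (2 * (m : ℤ) - 2) _ (by omega) hdvd hx with h | h
    · exact Or.inl (sub_eq_zero.mp h)
    · exact Or.inr h
end

section
/- Let $\mathcal{O} = \mathbb{C}[[s]]$, $K = \mathbb{C}((s))$, and fix integers $d_1 \le \dots \le d_n$ (fundamental degrees) and $d \ge 1$. For the admissible-Levi lattice $\mathfrak{j}^+ \subset \mathfrak{g}(K)$ with perpendicular lattice decomposition $DK^*((\mathfrak{j}^+)^\perp) = (\mathfrak{m}_{-1}u^{-1} \oplus \mathfrak{u}_\phi^\perp \oplus \prod_{j\ge 1}\mathfrak{g}_j u^j)\frac{du}{u}$ over the degree-$d$ extension $K' = \mathbb{C}((u))$, $s = u^d$: for any $X \frac{du}{u} \in DK^*((\mathfrak{j}^+)^\perp)$ viewed as a matrix of Laurent series in $u$, the $d_i$-th coefficient $c_{d_i}(X)$ of the characteristic polynomial (a sum of products of $d_i$ matrix entries with at most $d$ factors coming from the $u^{-1}$-part) has $u$-adic valuation $\ge -2d_i$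 when $d_i < d$ and $\ge -d_i - d$ when $d_i \ge d$. -/
open Matrix

/-- Order bound is multiplicative for Laurent series. -/
lemma LS_mul_bound {x y : LaurentSeries ℂ} {a b : ℤ}
    (hx : ∀ j : ℤ, j < a → x.coeff j = 0) (hy : ∀ j : ℤ, j < b → y.coeff j = 0) :
    ∀ j : ℤ, j < a + b → (x * y).coeff j = 0 := by
  intro j hj
  rw [HahnSeries.coeff_mul]
  apply Finset.sum_eq_zero
  intro ij hij
  rw [Finset.mem_addAntidiagonal] at hij
  obtain ⟨h1, h2, h3⟩ := hij
  by_cases hlt : ij.1 < a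
  · rw [hx _ hlt, zero_mul]
  · have : ij.2 < b := by omega
    rw [hy _ this, mul_zero]

/-- The key product estimate: a product of polynomials over `ℂ((u))`, each of degree `≤ 1`,
with linear coefficients of valuation `≥ 0` and constant coefficients of valuation `≥ -1`
(and `≥ 0` for non-"polar" indices).  Then the coefficient of `X^c` has valuation
`≥ -min (card - c) (#polar)`. -/
lemma LS_prod_bound {ι : Type*} [DecidableEq ι] (pol : ι → Prop) [DecidablePred pol]
    (s : Finset ι) (f : ι → Polynomial (LaurentSeries ℂ))
    (h0 : ∀ i ∈ s, ∀ j : ℤ, j < -1 → (((f i).coeff 0)).coeff j = 0)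
    (h0' : ∀ i ∈ s, ¬ pol i → ∀ j : ℤ, j < 0 → (((f i).coeff 0)).coeff j = 0)
    (h1 : ∀ i ∈ s, ∀ j : ℤ, j < 0 → (((f i).coeff 1)).coeff j = 0)
    (h2 : ∀ i ∈ s, ∀ c : ℕ, 2 ≤ c → (f i).coeff c = 0) :
    (∀ c : ℕ, s.card < c → (∏ i ∈ s, f i).coeff c = 0) ∧
    (∀ c : ℕ, ∀ j : ℤ,
      j < -((min (s.card - c) ((s.filter pol).card) : ℕ) : ℤ) →
      ((∏ i ∈ s, f i).coeff c).coeff j = 0) := by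
  induction s using Finset.cons_induction with
  | empty =>
    constructor
    · intro c hc
      rw [Finset.prod_empty, Polynomial.coeff_one]
      simp only [Finset.card_empty] at hc
      rw [if_neg (by omega)]
    · intro c j hj
      simp only [Finset.card_empty, Finset.filter_empty, Nat.zero_sub, min_self,
        Nat.cast_zero, neg_zero] at hj
      rw [Finset.prod_empty, Polynomial.coeff_one]
      by_cases hc : c = 0
      · rw [if_pos hc, HahnSeries.coeff_one, if_neg (by omega)]
      · rw [if_neg hc, HahnSeries.coeff_zero]
  | cons a s' ha IH =>
    have hmem : ∀ i ∈ s', i ∈ Finset.cons a s' ha := fun i hi =>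
      Finset.mem_cons_of_mem hi
    have hamem : a ∈ Finset.cons a s' ha := Finset.mem_cons_self a s'
    obtain ⟨IH1, IH2⟩ := IH (fun i hi => h0 i (hmem i hi)) (fun i hi => h0' i (hmem i hi))
      (fun i hi => h1 i (hmem i hi)) (fun i hi => h2 i (hmem i hi))
    rw [Finset.prod_cons]
    set P := ∏ i ∈ s', f i with hP
    constructor
    · intro c hc
      rw [Finset.card_cons] at hc
      rw [Polynomial.coeff_mul]
      apply Finset.sum_eq_zero
      intro xy hxy
      rw [Finset.HasAntidiagonal.mem_antidiagonal] at hxy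
      by_cases hx : 2 ≤ xy.1
      · rw [h2 a hamem xy.1 hx, zero_mul]
      · have : s'.card < xy.2 := by omega
        rw [IH1 xy.2 this, mul_zero]
    · intro c j hj
      rw [Polynomial.coeff_mul]
      have hms := map_sum (HahnSeries.coeff.addMonoidHom j)
        (fun xy : ℕ × ℕ => (f a).coeff xy.1 * P.coeff xy.2) (Finset.HasAntidiagonal.antidiagonal c)
      simp only [HahnSeries.coeff.addMonoidHom_apply] at hms
      rw [hms]
      apply Finset.sum_eq_zero
      intro xy hxy
      rw [Finset.HasAntidiagonal.mem_antidiagonal] at hxy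
      -- bookkeeping on cardinalities
      have hfilt : ((Finset.cons a s' ha).filter pol).card =
          (s'.filter pol).card + (if pol a then 1 else 0) := by
        rw [Finset.filter_cons]
        by_cases hpa : pol a
        · rw [if_pos hpa, if_pos hpa, Finset.card_cons]
        · rw [if_neg hpa, if_neg hpa, add_zero]
      set m' := (s'.filter pol).card with hm'
      rw [Finset.card_cons, hfilt] at hj
      by_cases hx2 : 2 ≤ xy.1
      · rw [h2 a hamem xy.1 hx2, zero_mul, HahnSeries.coeff_zero]
      by_cases hx1 : xy.1 = 1
      · -- linear coefficient of f a (valuation ≥ 0) times P.coeff (c-1)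
        have hb : ∀ jj : ℤ, jj < -((min (s'.card - xy.2) m' : ℕ) : ℤ) →
            (P.coeff xy.2).coeff jj = 0 := IH2 xy.2
        rw [hx1]
        apply LS_mul_bound (h1 a hamem) hb
        have h1' : xy.2 = c - 1 := by omega
        have : (min (s'.card - xy.2) m' : ℕ) ≤
            min (s'.card + 1 - c) (m' + if pol a then 1 else 0) := by
          apply le_min
          · exact le_trans (min_le_left _ _) (by omega)
          · exact le_trans (min_le_right _ _) (by omega)
        push_cast at this ⊢
        omega
      · -- constant coefficient: xy.1 = 0
        have hx0 : xy.1 = 0 := by omega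
        have hy : xy.2 = c := by omega
        by_cases hcb : s'.card < c
        · rw [hy, IH1 c hcb, mul_zero, HahnSeries.coeff_zero]
        · push_neg at hcb
          have hb : ∀ jj : ℤ, jj < -((min (s'.card - c) m' : ℕ) : ℤ) →
              (P.coeff xy.2).coeff jj = 0 := by rw [hy]; exact IH2 c
          by_cases hpa : pol a
          · apply LS_mul_bound (by rw [hx0]; exact h0 a hamem) hb
            rw [if_pos hpa] at hj
            have : min (s'.card + 1 - c) (m' + 1) = min (s'.card - c) m' + 1 := by
              omega
            push_cast [this] at hj ⊢
            omega
          · apply LS_mul_bound (by rw [hx0]; exact h0' a hamem hpa) hb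
            rw [if_neg hpa] at hj
            have : min (s'.card - c) m' ≤ min (s'.card + 1 - c) (m' + 0) := by
              apply le_min
              · exact le_trans (min_le_left _ _) (by omega)
              · exact le_trans (min_le_right _ _) (by omega)
            push_cast at this ⊢
            omega

/-- The key valuation estimate of Lemma 5.3: let `X` be a matrix over `ℂ((u))` of the form
`X = X₋₁ u⁻¹ + X₀ + ∑_{j≥1} Xⱼ uʲ` (all entries have valuation `≥ -1`), where the polar part
`X₋₁` has at most `d` nonzero entries, all in distinct rows and distinct columns. Then the
coefficient `c_k` of `λ^{N-k}` in `det(λ I + X)` has `u`-adic valuation `≥ -2k` when `k < d`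
and `≥ -k - d` when `k ≥ d`. -/
theorem stmt_14 (N d : ℕ) (hd : 1 ≤ d)
    (X : Matrix (Fin N) (Fin N) (LaurentSeries ℂ))
    (hval : ∀ p q : Fin N, ∀ j : ℤ, j < -1 → (X p q).coeff j = 0)
    (hcard : Set.ncard {pq : Fin N × Fin N | (X pq.1 pq.2).coeff (-1) ≠ 0} ≤ d)
    (hdistinct : ∀ p q p' q' : Fin N,
      (X p q).coeff (-1) ≠ 0 → (X p' q').coeff (-1) ≠ 0 → (p = p' ↔ q = q')) :
    ∀ k : ℕ, k ≤ N → ∀ j : ℤ,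
      j < (if k < d then -(2 * (k : ℤ)) else -(k : ℤ) - (d : ℤ)) →
      (((-X).charpoly).coeff (N - k)).coeff j = 0 := by
  intro k hk j hj
  -- it suffices to show vanishing for j < -min k d
  have hj' : j < -((min k d : ℕ) : ℤ) := by
    by_cases hkd : k < d
    · rw [if_pos hkd] at hj
      have : min k d = k := min_eq_left (le_of_lt hkd)
      rw [this]; push_cast; omega
    · rw [if_neg hkd] at hj
      push_neg at hkd
      have : min k d = d := min_eq_right hkd
      rw [this]; push_cast; omega
  rw [Matrix.charpoly, Matrix.det_apply, Polynomial.finset_sum_coeff]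
  have hms := map_sum (HahnSeries.coeff.addMonoidHom j)
    (fun σ : Equiv.Perm (Fin N) =>
      (Equiv.Perm.sign σ • ∏ i : Fin N, charmatrix (-X) (σ i) i).coeff (N - k))
    Finset.univ
  simp only [HahnSeries.coeff.addMonoidHom_apply] at hms
  rw [hms]
  apply Finset.sum_eq_zero
  intro σ _
  -- it suffices to show the product coefficient vanishes
  suffices h : (((∏ i, charmatrix (-X) (σ i) i).coeff (N - k)).coeff j) = 0 by
    have hz := map_zsmul ((HahnSeries.coeff.addMonoidHom j).comp
      ((Polynomial.lcoeff (LaurentSeries ℂ) (N - k)).toAddMonoidHom))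
      ((Equiv.Perm.sign σ : ℤˣ) : ℤ) (∏ i, charmatrix (-X) (σ i) i)
    simp only [AddMonoidHom.coe_comp, Function.comp_apply, LinearMap.toAddMonoidHom_coe,
      Polynomial.lcoeff_apply, HahnSeries.coeff.addMonoidHom_apply] at hz
    rw [Units.smul_def, hz, h, smul_zero]
  -- set up the polar predicate
  classical
  set S : Set (Fin N × Fin N) := {pq : Fin N × Fin N | (X pq.1 pq.2).coeff (-1) ≠ 0} with hS
  have hSfin : S.Finite := Set.toFinite S
  -- apply the product bound  with pol i ↔ entry (σ i, i) is polar
  have key := LS_prod_bound (fun i : Fin N => (X (σ i) i).coeff (-1) ≠ 0)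
    Finset.univ (fun i => charmatrix (-X) (σ i) i)
    (by
      intro i _ jj hjj
      beta_reduce
      by_cases h : σ i = i
      · rw [h, charmatrix_apply_eq]
        simp only [Polynomial.coeff_sub, Polynomial.coeff_X_zero, Polynomial.coeff_C_zero,
          Matrix.neg_apply, zero_sub, neg_neg]
        exact hval i i jj hjj
      · rw [charmatrix_apply_ne _ _ _ h]
        simp only [Polynomial.coeff_neg, Polynomial.coeff_C_zero, Matrix.neg_apply, neg_neg]
        exact hval (σ i) i jj hjj)
    (by
      intro i _ hpol jj hjj
      beta_reduce
      have hpol' : (X (σ i) i).coeff (-1) = 0 := not_not.mp hpol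
      by_cases h : σ i = i
      · rw [h] at hpol'
        rw [h, charmatrix_apply_eq]
        simp only [Polynomial.coeff_sub, Polynomial.coeff_X_zero, Polynomial.coeff_C_zero,
          Matrix.neg_apply, zero_sub, neg_neg]
        rcases lt_or_ge jj (-1) with hlt | hge
        · exact hval i i jj hlt
        · have : jj = -1 := by omega
          rw [this]; exact hpol'
      · rw [charmatrix_apply_ne _ _ _ h]
        simp only [Polynomial.coeff_neg, Polynomial.coeff_C_zero, Matrix.neg_apply, neg_neg]
        rcases lt_or_ge jj (-1) with hlt | hge
        · exact hval (σ i) i jj hlt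
        · have : jj = -1 := by omega
          rw [this]; exact hpol')
    (by
      intro i _ jj hjj
      beta_reduce
      by_cases h : σ i = i
      · rw [h, charmatrix_apply_eq]
        simp only [Polynomial.coeff_sub, Polynomial.coeff_X_one]
        rw [Polynomial.coeff_C, if_neg (by omega)]
        rw [sub_zero, HahnSeries.coeff_one, if_neg (by omega)]
      · rw [charmatrix_apply_ne _ _ _ h]
        simp only [Polynomial.coeff_neg]
        rw [Polynomial.coeff_C, if_neg (by omega)]
        simp)
    (by
      intro i _ c hc
      beta_reduce
      by_cases h : σ i = i
      · rw [h, charmatrix_apply_eq]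
        rw [Polynomial.coeff_sub, Polynomial.coeff_X, Polynomial.coeff_C,
          if_neg (by omega), if_neg (by omega), sub_zero]
      · rw [charmatrix_apply_ne _ _ _ h]
        rw [Polynomial.coeff_neg, Polynomial.coeff_C, if_neg (by omega), neg_zero])
  obtain ⟨-, key2⟩ := key
  apply key2 (N - k) j
  -- compare the bound with -min k d
  have hcardbound :
      (Finset.univ.filter (fun i : Fin N => (X (σ i) i).coeff (-1) ≠ 0)).card ≤ d := by
    have hinj : Set.InjOn (fun i : Fin N => ((σ i, i) : Fin N × Fin N))
        ↑(Finset.univ.filter (fun i : Fin N => (X (σ i) i).coeff (-1) ≠ 0)) := by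
      intro x _ y _ hxy
      exact (Prod.mk.injEq _ _ _ _).mp hxy |>.2
    have hsub : (fun i : Fin N => ((σ i, i) : Fin N × Fin N)) ''
        ↑(Finset.univ.filter (fun i : Fin N => (X (σ i) i).coeff (-1) ≠ 0)) ⊆ S := by
      rintro ⟨p, q⟩ ⟨i, hi, hpq⟩
      simp only [Finset.coe_filter, Set.mem_setOf_eq, Finset.mem_univ, true_and] at hi
      obtain ⟨h1, h2⟩ := Prod.mk.injEq _ _ _ _ |>.mp hpq
      rw [hS]
      simp only [Set.mem_setOf_eq]
      rw [← h1, ← h2]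
      exact hi
    calc (Finset.univ.filter (fun i : Fin N => (X (σ i) i).coeff (-1) ≠ 0)).card
        = ((Finset.univ.filter (fun i : Fin N => (X (σ i) i).coeff (-1) ≠ 0)) : Set (Fin N)).ncard := by
          rw [Set.ncard_coe_finset]
      _ = ((fun i : Fin N => ((σ i, i) : Fin N × Fin N)) ''
            ↑(Finset.univ.filter (fun i : Fin N => (X (σ i) i).coeff (-1) ≠ 0))).ncard := by
          rw [Set.ncard_image_of_injOn hinj]
      _ ≤ S.ncard := Set.ncard_le_ncard hsub hSfin
      _ ≤ d := hcard
  have hNk : (Finset.univ : Finset (Fin N)).card - (N - k) = k := by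
    rw [Finset.card_univ, Fintype.card_fin]
    omega
  rw [hNk]
  have hmm : min k (Finset.univ.filter (fun i : Fin N => (X (σ i) i).coeff (-1) ≠ 0)).card ≤
      min k d := min_le_min (le_refl k) hcardbound
  omega
end

section
/- Let $U$ and $H \subseteq U$ be smooth affine algebraic groups over a field $k$ of characteristic zero (or $p$ large), with $U$ unipotent, and suppose a torus $S$ acts on $U$ by group automorphisms preserving $H$, fixing only the identity, such that there exists a cocharacter $\lambda: \mathbb{G}_m \to S$ acting with strictly positive weights on $\mathrm{Lie}(U)$. If $V \subseteq U$ is an $S$-stable smooth closed subscheme containing $e$ with $\mathrm{Lie}(V) \oplus \mathrm{Lie}(H) = \mathrm{Lie}(U)$ (as $S$-modules), then the multiplication map $V \times H \to U$ is an isomorphism of schemes. -/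
open MvPolynomial

namespace Stmt17Aux

variable {σ τ : Type*}

lemma eval_bind1 (g : σ → MvPolynomial τ ℂ) (p : MvPolynomial σ ℂ) (z : τ → ℂ) :
    eval z (bind₁ g p) = eval (fun i => eval z (g i)) p := by
  induction p using MvPolynomial.induction_on with
  | C a => simp
  | add p q hp hq => simp [hp, hq]
  | mul_X p j hp => simp [hp]

lemma eval_zero_eq (p : MvPolynomial σ ℂ) : eval (0 : σ → ℂ) p = coeff 0 p := by
  simp [← MvPolynomial.constantCoeff_eq]

noncomputable def linCoeff [Fintype σ] (p : MvPolynomial σ ℂ) : (σ → ℂ) →L[ℂ] ℂ :=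
  ∑ k, coeff (Finsupp.single k 1) p • ContinuousLinearMap.proj k

lemma linCoeff_apply [Fintype σ] (p : MvPolynomial σ ℂ) (z : σ → ℂ) :
    linCoeff p z = ∑ k, coeff (Finsupp.single k 1) p * z k := by
  simp [linCoeff]

lemma hasFDerivAt_eval_zero [Fintype σ] (p : MvPolynomial σ ℂ) :
    HasFDerivAt (fun z : σ → ℂ => eval z p) (linCoeff p) 0 := by
  classical
  induction p using MvPolynomial.induction_on with
  | C a =>
      have h : linCoeff (C a : MvPolynomial σ ℂ) = 0 := by
        ext z
        rw [linCoeff_apply]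
        refine Eq.trans (Finset.sum_eq_zero fun k _ => ?_) (by simp)
        rw [coeff_C, if_neg (fun h => one_ne_zero (Finsupp.single_eq_zero.mp h.symm)), zero_mul]
      rw [h]
      exact (hasFDerivAt_const a 0).congr_of_eventuallyEq
        (Filter.Eventually.of_forall fun z => by simp)
  | add p q hp hq =>
      have h : linCoeff (p + q) = linCoeff p + linCoeff q := by
        ext z
        simp [linCoeff_apply, add_mul, Finset.sum_add_distrib]
      rw [h]
      exact (hp.add hq).congr_of_eventuallyEq (Filter.Eventually.of_forall fun z => by simp)
  | mul_X p j hp =>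
      have hj := hasFDerivAt_apply (𝕜 := ℂ) j (0 : σ → ℂ)
      have hm := hp.mul hj
      refine (hm.congr_of_eventuallyEq (Filter.Eventually.of_forall
        (fun z : σ → ℂ => by simp))).congr_fderiv ?_
      ext z
      have hterm : ∀ k, coeff (Finsupp.single k 1) (p * X j) * z k
          = (if k = j then coeff 0 p * z j else 0) := by
        intro k
        rw [coeff_mul_X']
        by_cases hk : k = j
        · subst hk
          rw [if_pos (by simp), if_pos rfl]
          congr 2
          simp
        · rw [if_neg ?_, zero_mul, if_neg hk]
          rw [Finsupp.support_single_ne_zero _ one_ne_zero]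
          simp [Ne.symm hk]
      rw [linCoeff_apply]
      simp only [ContinuousLinearMap.add_apply, ContinuousLinearMap.coe_smul',
        Pi.smul_apply, ContinuousLinearMap.proj_apply, smul_eq_mul]
      rw [Finset.sum_congr rfl (fun k _ => hterm k), Finset.sum_ite_eq' Finset.univ j
        (fun _ => coeff 0 p * z j)]
      simp [eval_zero_eq, MvPolynomial.constantCoeff_eq]


/-- weighted degree of a monomial -/
def degW (w : σ → ℕ) (m : σ →₀ ℕ) : ℕ := ∑ j ∈ m.support, m j * w j

lemma degW_single (w : σ → ℕ) (k : σ) : degW w (Finsupp.single k 1) = w k := by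
  classical
  rw [degW, Finsupp.support_single_ne_zero _ one_ne_zero]
  simp

lemma scale_monomial (w : σ → ℕ) (c : ℂ) (m' : σ →₀ ℕ) (a : ℂ) :
    bind₁ (fun j => (C (c ^ w j) * X j : MvPolynomial σ ℂ)) (monomial m' a)
      = monomial m' (c ^ degW w m' * a) := by
  have h1 : ∀ j ∈ m'.support, (C (c ^ w j) * X j : MvPolynomial σ ℂ) ^ m' j
      = C (c ^ (m' j * w j)) * X j ^ m' j := by
    intro j _
    rw [mul_pow, ← C_pow, ← pow_mul, mul_comm (w j)]
  rw [bind₁_monomial, Finset.prod_congr rfl h1, Finset.prod_mul_distrib, ← map_prod,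
    Finset.prod_pow_eq_pow_sum, prod_X_pow_eq_monomial, ← mul_assoc, ← C_mul,
    C_mul_monomial, mul_one, mul_comm a]
  rfl

lemma coeff_scale (w : σ → ℕ) (c : ℂ) (p : MvPolynomial σ ℂ) (m : σ →₀ ℕ) :
    coeff m (bind₁ (fun j => (C (c ^ w j) * X j : MvPolynomial σ ℂ)) p)
      = c ^ degW w m * coeff m p := by
  classical
  conv_lhs => rw [← support_sum_monomial_coeff p]
  rw [map_sum, coeff_sum]
  have h2 : ∀ m' ∈ p.support,
      coeff m (bind₁ (fun j => (C (c ^ w j) * X j : MvPolynomial σ ℂ)) (monomial m' (coeff m' p)))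
        = if m' = m then c ^ degW w m * coeff m p else 0 := by
    intro m' _
    rw [scale_monomial, coeff_monomial]
    by_cases h : m' = m
    · subst h; simp
    · simp [h]
  rw [Finset.sum_congr rfl h2, Finset.sum_ite_eq' p.support m]
  by_cases hm : m ∈ p.support
  · rw [if_pos hm]
  · rw [if_neg hm]
    rw [MvPolynomial.notMem_support_iff.mp hm, mul_zero]

lemma eval_scale (w : σ → ℕ) (c : ℂ) (p : MvPolynomial σ ℂ) (z : σ → ℂ) :
    eval z (bind₁ (fun j => (C (c ^ w j) * X j : MvPolynomial σ ℂ)) p)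
      = eval (fun j => c ^ w j * z j) p := by
  have hfe : (fun i => eval z (C (c ^ w i) * X i)) = fun j => c ^ w j * z j := by
    funext j; simp
  rw [eval_bind1, hfe]

/-- A polynomial satisfying the functional homogeneity equation has all its monomials of
weighted degree `d`. -/
lemma homog_of_equiv [Fintype σ] (w : σ → ℕ) (p : MvPolynomial σ ℂ) (d : ℕ)
    (h : ∀ c : ℂ, ∀ z : σ → ℂ, eval (fun j => c ^ w j * z j) p = c ^ d * eval z p) :
    ∀ m, coeff m p ≠ 0 → degW w m = d := by
  intro m hm
  have key : ∀ c : ℂ, c ^ degW w m * coeff m p = c ^ d * coeff m p := by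
    intro c
    have hq : bind₁ (fun j => (C (c ^ w j) * X j : MvPolynomial σ ℂ)) p = C (c ^ d) * p := by
      apply MvPolynomial.funext
      intro z
      rw [eval_scale, h c z, eval_mul, eval_C]
    have := congrArg (coeff m) hq
    rwa [coeff_scale, coeff_C_mul] at this
  have h2 := key 2
  have h3 : (2 : ℂ) ^ degW w m = 2 ^ d := mul_right_cancel₀ hm h2
  have h4 : ((2 ^ degW w m : ℕ) : ℂ) = ((2 ^ d : ℕ) : ℂ) := by push_cast; exact h3
  exact Nat.pow_right_injective le_rfl (Nat.cast_injective h4)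

/-- evaluation depends only on the variables satisfying `Q` occurring in monomials -/
lemma eval_congr_support (p : MvPolynomial σ ℂ) (Q : σ → Prop)
    (h : ∀ m ∈ p.support, ∀ k ∈ m.support, Q k)
    (z z' : σ → ℂ) (hz : ∀ k, Q k → z k = z' k) : eval z p = eval z' p := by
  rw [eval_eq, eval_eq]
  refine Finset.sum_congr rfl fun m hm => ?_
  congr 1
  refine Finset.prod_congr rfl fun k hk => ?_
  rw [hz k (h m hm k hk)]

/-- in a monomial of weighted degree `d` that is neither constant nor linear,
each variable has weight `< d` -/
lemma weight_lt (w : σ → ℕ) (hw : ∀ j, 0 < w j) (m : σ →₀ ℕ) (d : ℕ)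
    (hdeg : degW w m = d) (hnl : ∀ k, m ≠ Finsupp.single k 1) :
    ∀ k ∈ m.support, w k < d := by
  classical
  intro k hk
  have hk1 : 1 ≤ m k := Nat.one_le_iff_ne_zero.mpr (Finsupp.mem_support_iff.mp hk)
  have hsplit : m k * w k + ∑ j ∈ m.support.erase k, m j * w j = d := by
    rw [← hdeg, degW]
    exact Finset.add_sum_erase _ (fun j => m j * w j) hk
  rcases Nat.lt_or_ge (m k) 2 with h2 | h2
  · -- m k = 1, so there is another variable
    have hmk : m k = 1 := le_antisymm (Nat.lt_succ_iff.mp h2) hk1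
    have : ∃ k', k' ∈ m.support.erase k := by
      by_contra hno
      push_neg at hno
      apply hnl k
      ext k'
      by_cases hkk : k' = k
      · subst hkk; simp [hmk]
      · have : k' ∉ m.support := by
          intro hmem
          exact hno k' (Finset.mem_erase.mpr ⟨hkk, hmem⟩)
        rw [Finsupp.notMem_support_iff.mp this, Finsupp.single_apply, if_neg (Ne.symm hkk)]
    obtain ⟨k', hk'⟩ := this
    have h5 : 1 ≤ ∑ j ∈ m.support.erase k, m j * w j := by
      calc 1 ≤ m k' * w k' := Nat.one_le_iff_ne_zero.mpr (Nat.mul_ne_zero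
              (Finsupp.mem_support_iff.mp (Finset.mem_erase.mp hk').2)
              (Nat.pos_iff_ne_zero.mp (hw k')))
        _ ≤ _ := Finset.single_le_sum (f := fun j => m j * w j)
              (fun j _ => Nat.zero_le _) hk'
    rw [hmk, one_mul] at hsplit
    omega
  · -- m k ≥ 2
    have : 2 * w k ≤ m k * w k := Nat.mul_le_mul_right _ h2
    have hwk := hw k
    omega


/-- iterative construction of the inverse map's polynomials -/
noncomputable def Sseq (Mp : σ → MvPolynomial τ ℂ) (Ep : σ → MvPolynomial σ ℂ) :
    ℕ → σ → MvPolynomial τ ℂ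
  | 0 => Mp
  | n+1 => fun j => Mp j - bind₁ (Sseq Mp Ep n) (Ep j)

lemma Sseq_eval_succ (Mp : σ → MvPolynomial τ ℂ) (Ep : σ → MvPolynomial σ ℂ)
    (n : ℕ) (u : τ → ℂ) (j : σ) :
    eval u (Sseq Mp Ep (n+1) j)
      = eval u (Mp j) - eval (fun k => eval u (Sseq Mp Ep n k)) (Ep j) := by
  rw [show Sseq Mp Ep (n+1) j = Mp j - bind₁ (Sseq Mp Ep n) (Ep j) from rfl, map_sub,
    eval_bind1]

lemma Sseq_stab (Mp : σ → MvPolynomial τ ℂ) (Ep : σ → MvPolynomial σ ℂ)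
    (wd : σ → ℕ) (hwd : ∀ j, 0 < wd j)
    (hEdep : ∀ j (z z' : σ → ℂ), (∀ k, wd k < wd j → z k = z' k) →
      eval z (Ep j) = eval z' (Ep j)) :
    ∀ d n m, d ≤ n → d ≤ m → ∀ (u : τ → ℂ) (j : σ), wd j ≤ d →
      eval u (Sseq Mp Ep n j) = eval u (Sseq Mp Ep m j) := by
  intro d
  induction d with
  | zero => intro n m _ _ u j hj; exact absurd hj (by have := hwd j; omega)
  | succ d ih =>
      intro n m hn hm u j hj
      obtain ⟨n', rfl⟩ : ∃ n', n = n' + 1 := ⟨n - 1, by omega⟩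
      obtain ⟨m', rfl⟩ : ∃ m', m = m' + 1 := ⟨m - 1, by omega⟩
      rw [Sseq_eval_succ, Sseq_eval_succ]
      congr 1
      apply hEdep
      intro k hk
      exact ih n' m' (by omega) (by omega) u k (by omega)


noncomputable def precompCLM {ι κ : Type*} [Fintype ι] [Fintype κ] (f : ι → κ) :
    (κ → ℂ) →L[ℂ] (ι → ℂ) :=
  LinearMap.toContinuousLinearMap (LinearMap.funLeft ℂ ℂ f)

lemma precompCLM_apply {ι κ : Type*} [Fintype ι] [Fintype κ] (f : ι → κ) (z : κ → ℂ) :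
    precompCLM f z = fun i => z (f i) := rfl

noncomputable def scaleCLM {ι : Type*} [Fintype ι] (w : ι → ℕ) (c : ℂ) :
    (ι → ℂ) →L[ℂ] (ι → ℂ) :=
  LinearMap.toContinuousLinearMap (LinearMap.pi (fun i => c ^ w i • LinearMap.proj i))

lemma scaleCLM_apply {ι : Type*} [Fintype ι] (w : ι → ℕ) (c : ℂ) (z : ι → ℂ) :
    scaleCLM w c z = fun i => c ^ w i * z i := rfl

noncomputable def sumElimCLM {ι κ : Type*} [Fintype ι] [Fintype κ] :
    ((ι → ℂ) × (κ → ℂ)) →L[ℂ] (ι ⊕ κ → ℂ) :=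
  LinearMap.toContinuousLinearMap (LinearMap.pi (fun s => Sum.rec
    (fun i => (LinearMap.proj i).comp (LinearMap.fst ℂ (ι → ℂ) (κ → ℂ)))
    (fun i => (LinearMap.proj i).comp (LinearMap.snd ℂ (ι → ℂ) (κ → ℂ))) s))

lemma sumElimCLM_apply {ι κ : Type*} [Fintype ι] [Fintype κ] (q : (ι → ℂ) × (κ → ℂ)) :
    sumElimCLM q = Sum.elim q.1 q.2 := by
  funext s; cases s <;> rfl

end Stmt17Aux



/-- `f` is a polynomial map `𝔸ᵃ → 𝔸ᴺ`. -/
def IsPolyMap {a N : ℕ} (f : (Fin a → ℂ) → (Fin N → ℂ)) : Prop :=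
  ∃ P : Fin N → MvPolynomial (Fin a) ℂ, ∀ x i, f x i = MvPolynomial.eval x (P i)

/-- `μ` is a polynomial map `𝔸ᴺ × 𝔸ᴺ → 𝔸ᴺ`. -/
def IsPolyMap2 {N : ℕ} (μ : (Fin N → ℂ) → (Fin N → ℂ) → (Fin N → ℂ)) : Prop :=
  ∃ P : Fin N → MvPolynomial (Fin N ⊕ Fin N) ℂ,
    ∀ x y i, μ x y i = MvPolynomial.eval (Sum.elim x y) (P i)

/-- The linearized `𝔾ₘ`-action with weights `w`: `(c • x) i = c^(w i) * x i`. -/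
def scaleWt {N : ℕ} (w : Fin N → ℕ) (c : ℂ) (x : Fin N → ℂ) : Fin N → ℂ :=
  fun i => c ^ w i * x i

/-- The Luna-map argument of Proposition 4.9, in linearized coordinates (char 0, so a unipotent
group `U` is isomorphic as a variety to affine space `𝔸ᴺ` with identity `e = 0`, and the
`𝔾ₘ ⊆ S`-action with strictly positive weights can be linearized): let `U = 𝔸ᴺ` carry a
polynomial group law `μ` with identity `0`, equivariant for a `𝔾ₘ`-action with strictly
positive weights; let `V` and `H` be the images of equivariant polynomial embeddings
`φ : 𝔸ᵃ → U`, `ψ : 𝔸ᵇ → U` through `e`, with `H` a subgroup, whose tangent spaces at `e` are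
complementary (`Lie(V) ⊕ Lie(H) = Lie(U)`). Then the multiplication map
`V × H → U, (v, h) ↦ μ(v, h)` is an isomorphism of schemes (a bijection, polynomial with
polynomial inverse by equivariance). -/
theorem stmt_17 (N a b : ℕ) (hab : a + b = N)
    (wU : Fin N → ℕ) (hwU : ∀ i, 0 < wU i)
    (wV : Fin a → ℕ) (hwV : ∀ i, 0 < wV i)
    (wH : Fin b → ℕ) (hwH : ∀ i, 0 < wH i)
    (μ : (Fin N → ℂ) → (Fin N → ℂ) → (Fin N → ℂ))
    (hμpoly : IsPolyMap2 μ)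
    (hμ_idl : ∀ x, μ 0 x = x) (hμ_idr : ∀ x, μ x 0 = x)
    (hμ_assoc : ∀ x y z, μ (μ x y) z = μ x (μ y z))
    (hμ_inv : ∀ x, ∃ y, μ x y = 0)
    (hμ_equiv : ∀ c x y, μ (scaleWt wU c x) (scaleWt wU c y) = scaleWt wU c (μ x y))
    (φ : (Fin a → ℂ) → (Fin N → ℂ)) (ψ : (Fin b → ℂ) → (Fin N → ℂ))
    (hφpoly : IsPolyMap φ) (hψpoly : IsPolyMap ψ)
    (hφ0 : φ 0 = 0) (hψ0 : ψ 0 = 0)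
    (hφeq : ∀ c x, φ (scaleWt wV c x) = scaleWt wU c (φ x))
    (hψeq : ∀ c y, ψ (scaleWt wH c y) = scaleWt wU c (ψ y))
    (hψsub : ∀ y y', ∃ y'', μ (ψ y) (ψ y') = ψ y'')
    (Lφ : (Fin a → ℂ) →L[ℂ] (Fin N → ℂ)) (Lψ : (Fin b → ℂ) →L[ℂ] (Fin N → ℂ))
    (hLφ : HasFDerivAt φ Lφ 0) (hLψ : HasFDerivAt ψ Lψ 0)
    (hcompl : Function.Bijective fun p : (Fin a → ℂ) × (Fin b → ℂ) => Lφ p.1 + Lψ p.2) :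
    Function.Bijective (fun p : (Fin a → ℂ) × (Fin b → ℂ) => μ (φ p.1) (ψ p.2)) ∧
    ∃ ι : (Fin N → ℂ) → (Fin a → ℂ) × (Fin b → ℂ),
      (∃ P : (Fin a ⊕ Fin b) → MvPolynomial (Fin N) ℂ,
        ∀ u, (∀ i, (ι u).1 i = MvPolynomial.eval u (P (Sum.inl i))) ∧
          ∀ i, (ι u).2 i = MvPolynomial.eval u (P (Sum.inr i))) ∧
      Function.LeftInverse ι (fun p : (Fin a → ℂ) × (Fin b → ℂ) => μ (φ p.1) (ψ p.2)) ∧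
      Function.RightInverse ι (fun p : (Fin a → ℂ) × (Fin b → ℂ) => μ (φ p.1) (ψ p.2)) := by
  classical
  open Stmt17Aux MvPolynomial in
  obtain ⟨Pμ, hPμ⟩ := hμpoly
  obtain ⟨Pφ, hPφ⟩ := hφpoly
  obtain ⟨Pψ, hPψ⟩ := hψpoly
  -- domain weights
  set J := (Fin a ⊕ Fin b) with hJ
  let wd : J → ℕ := Sum.elim wV wH
  have hwd : ∀ j, 0 < wd j := by rintro (i|i); exacts [hwV i, hwH i]
  -- the combined map and its polynomials
  let Ftil : (J → ℂ) → (Fin N → ℂ) :=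
    fun z => μ (φ (fun i => z (Sum.inl i))) (ψ (fun i => z (Sum.inr i)))
  let R : Fin N → MvPolynomial J ℂ := fun i =>
    bind₁ (Sum.elim (fun i' => rename Sum.inl (Pφ i')) (fun i' => rename Sum.inr (Pψ i'))) (Pμ i)
  have hR : ∀ (z : J → ℂ) i, Ftil z i = eval z (R i) := by
    intro z i
    have hg : (fun s => eval z (Sum.elim (fun i' => rename Sum.inl (Pφ i'))
        (fun i' => rename (Sum.inr : Fin b → J) (Pψ i')) s))
        = Sum.elim (φ (fun i' => z (Sum.inl i'))) (ψ (fun i' => z (Sum.inr i'))) := by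
      funext s
      cases s with
      | inl i' => simp only [Sum.elim_inl, eval_rename]; exact (hPφ _ i').symm
      | inr i' => simp only [Sum.elim_inr, eval_rename]; exact (hPψ _ i').symm
    show μ (φ (fun i' => z (Sum.inl i'))) (ψ (fun i' => z (Sum.inr i'))) i = eval z (R i)
    rw [hPμ, show R i = bind₁ (Sum.elim (fun i' => rename Sum.inl (Pφ i'))
      (fun i' => rename Sum.inr (Pψ i'))) (Pμ i) from rfl, eval_bind1, hg]
  -- equivariance of Ftil
  have hFeq : ∀ (c : ℂ) (z : J → ℂ),
      Ftil (fun j => c ^ wd j * z j) = scaleWt wU c (Ftil z) := by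
    intro c z
    show μ (φ (fun i => c ^ wd (Sum.inl i) * z (Sum.inl i)))
        (ψ (fun i => c ^ wd (Sum.inr i) * z (Sum.inr i))) = _
    have h1 : (fun i => c ^ wd (Sum.inl i) * z (Sum.inl i))
        = scaleWt wV c (fun i => z (Sum.inl i)) := rfl
    have h2 : (fun i => c ^ wd (Sum.inr i) * z (Sum.inr i))
        = scaleWt wH c (fun i => z (Sum.inr i)) := rfl
    rw [h1, h2, hφeq, hψeq, hμ_equiv]
  -- homogeneity of R
  have hRhom : ∀ i m, coeff m (R i) ≠ 0 → degW wd m = wU i := by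
    intro i
    apply homog_of_equiv
    intro c z
    rw [← hR, ← hR, hFeq]
    rfl
  -- derivative of Ftil at 0, in two ways
  let ρa : (J → ℂ) →L[ℂ] (Fin a → ℂ) := precompCLM Sum.inl
  let ρb : (J → ℂ) →L[ℂ] (Fin b → ℂ) := precompCLM Sum.inr
  let A : ((Fin N → ℂ) × (Fin N → ℂ)) →L[ℂ] (Fin N → ℂ) :=
    ContinuousLinearMap.pi (fun i => (linCoeff (Pμ i)).comp sumElimCLM)
  have hμd : HasFDerivAt (fun q : (Fin N → ℂ) × (Fin N → ℂ) => μ q.1 q.2) A (0, 0) := by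
    apply hasFDerivAt_pi''
    intro i
    have h0 : sumElimCLM (0 : (Fin N → ℂ) × (Fin N → ℂ)) = 0 := map_zero _
    have hg := hasFDerivAt_eval_zero (Pμ i)
    rw [← h0] at hg
    have h := hg.comp (0 : (Fin N → ℂ) × (Fin N → ℂ))
      ((sumElimCLM (ι := Fin N) (κ := Fin N)).hasFDerivAt
        (x := (0 : (Fin N → ℂ) × (Fin N → ℂ))))
    rw [ContinuousLinearMap.proj_pi]
    refine (h.congr_of_eventuallyEq (.of_forall fun q => ?_))
    show μ q.1 q.2 i = eval (sumElimCLM q) (Pμ i)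
    rw [hPμ, sumElimCLM_apply]
  have hAinl : ∀ u : Fin N → ℂ, A (u, 0) = u := by
    have hid : HasFDerivAt (fun x : Fin N → ℂ => μ x 0)
        (A.comp (ContinuousLinearMap.inl ℂ (Fin N → ℂ) (Fin N → ℂ))) 0 := by
      have hinl := (ContinuousLinearMap.inl ℂ (Fin N → ℂ) (Fin N → ℂ)).hasFDerivAt
        (x := (0 : Fin N → ℂ))
      have hA := hμd
      rw [show ((0,0) : (Fin N → ℂ) × (Fin N → ℂ))
        = ContinuousLinearMap.inl ℂ (Fin N → ℂ) (Fin N → ℂ) 0 from by simp] at hA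
      exact (hA.comp 0 hinl).congr_of_eventuallyEq (.of_forall fun x => by
        simp [Function.comp, ContinuousLinearMap.inl_apply])
    rw [show (fun x : Fin N → ℂ => μ x 0) = fun x => x from funext hμ_idr] at hid
    have := hid.unique (hasFDerivAt_id 0)
    intro u
    have h2 := congrArg (fun (T : (Fin N → ℂ) →L[ℂ] (Fin N → ℂ)) => T u) this
    simpa using h2
  have hAinr : ∀ v : Fin N → ℂ, A (0, v) = v := by
    have hid : HasFDerivAt (fun y : Fin N → ℂ => μ 0 y)
        (A.comp (ContinuousLinearMap.inr ℂ (Fin N → ℂ) (Fin N → ℂ))) 0 := by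
      have hinr := (ContinuousLinearMap.inr ℂ (Fin N → ℂ) (Fin N → ℂ)).hasFDerivAt
        (x := (0 : Fin N → ℂ))
      have hA := hμd
      rw [show ((0,0) : (Fin N → ℂ) × (Fin N → ℂ))
        = ContinuousLinearMap.inr ℂ (Fin N → ℂ) (Fin N → ℂ) 0 from by simp] at hA
      exact (hA.comp 0 hinr).congr_of_eventuallyEq (.of_forall fun x => by
        simp [Function.comp, ContinuousLinearMap.inr_apply])
    rw [show (fun y : Fin N → ℂ => μ 0 y) = fun y => y from funext hμ_idl] at hid
    have := hid.unique (hasFDerivAt_id 0)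
    intro v
    have h2 := congrArg (fun (T : (Fin N → ℂ) →L[ℂ] (Fin N → ℂ)) => T v) this
    simpa using h2
  have hAadd : ∀ u v : Fin N → ℂ, A (u, v) = u + v := by
    intro u v
    have : ((u, v) : (Fin N → ℂ) × (Fin N → ℂ)) = (u, 0) + (0, v) := by simp
    rw [this, map_add, hAinl, hAinr]
  let Tc : (J → ℂ) →L[ℂ] (Fin N → ℂ) := A.comp ((Lφ.comp ρa).prod (Lψ.comp ρb))
  have hTfun : ∀ z : J → ℂ, Tc z = Lφ (fun i => z (Sum.inl i)) + Lψ (fun i => z (Sum.inr i)) := by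
    intro z
    show A (Lφ (ρa z), Lψ (ρb z)) = _
    rw [hAadd]
    rfl
  have hρa0 : ρa (0 : J → ℂ) = 0 := map_zero _
  have hρb0 : ρb (0 : J → ℂ) = 0 := map_zero _
  have hFd : HasFDerivAt Ftil Tc 0 := by
    have hφc : HasFDerivAt (fun z : J → ℂ => φ (ρa z)) (Lφ.comp ρa) 0 := by
      have h := hLφ
      rw [← hρa0] at h
      exact (h.comp 0 ρa.hasFDerivAt).congr_of_eventuallyEq (.of_forall fun z => rfl)
    have hψc : HasFDerivAt (fun z : J → ℂ => ψ (ρb z)) (Lψ.comp ρb) 0 := by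
      have h := hLψ
      rw [← hρb0] at h
      exact (h.comp 0 ρb.hasFDerivAt).congr_of_eventuallyEq (.of_forall fun z => rfl)
    have hpair := HasFDerivAt.prodMk hφc hψc
    have hμd' := hμd
    rw [show ((0,0) : (Fin N → ℂ) × (Fin N → ℂ))
      = ((fun z : J → ℂ => (φ (ρa z), ψ (ρb z))) 0) from by
        simp [hρa0, hρb0, hφ0, hψ0]] at hμd'
    exact (hμd'.comp 0 hpair).congr_of_eventuallyEq (.of_forall fun z => rfl)
  let L0c : (J → ℂ) →L[ℂ] (Fin N → ℂ) := ContinuousLinearMap.pi (fun i => linCoeff (R i))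
  have hFd2 : HasFDerivAt Ftil L0c 0 := by
    apply hasFDerivAt_pi''
    intro i
    rw [ContinuousLinearMap.proj_pi,
      show (fun z => Ftil z i) = fun z => eval z (R i) from funext fun z => hR z i]
    exact hasFDerivAt_eval_zero (R i)
  have hTL0 : Tc = L0c := hFd.unique hFd2
  -- entries of T
  let t : Fin N → J → ℂ := fun i k => coeff (Finsupp.single k 1) (R i)
  have hT : ∀ (z : J → ℂ) i, Tc z i = ∑ k, t i k * z k := by
    intro z i
    rw [hTL0]
    show (ContinuousLinearMap.pi (fun i => linCoeff (R i))) z i = _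
    rw [ContinuousLinearMap.pi_apply, linCoeff_apply]
  -- bijectivity of T
  have hTbij : Function.Bijective (⇑Tc) := by
    have : (⇑Tc) = (fun p : (Fin a → ℂ) × (Fin b → ℂ) => Lφ p.1 + Lψ p.2)
        ∘ (fun z : J → ℂ => ((fun i => z (Sum.inl i)), (fun i => z (Sum.inr i)))) :=
      funext fun z => hTfun z
    rw [this]
    exact hcompl.comp (Equiv.sumArrowEquivProdArrow _ _ ℂ).bijective
  -- equivariance of T
  have hLφsc : ∀ (c : ℂ) (x : Fin a → ℂ), Lφ (scaleWt wV c x) = scaleWt wU c (Lφ x) := by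
    intro c x
    have hs0 : scaleCLM wV c (0 : Fin a → ℂ) = 0 := map_zero _
    have h1 : HasFDerivAt (fun x => φ (scaleWt wV c x)) (Lφ.comp (scaleCLM wV c)) 0 := by
      have h := hLφ
      rw [← hs0] at h
      exact (h.comp 0 (scaleCLM wV c).hasFDerivAt).congr_of_eventuallyEq
        (.of_forall fun z => rfl)
    have h2 : HasFDerivAt (fun x => scaleWt wU c (φ x)) ((scaleCLM wU c).comp Lφ) 0 :=
      ((scaleCLM wU c).hasFDerivAt.comp 0 hLφ).congr_of_eventuallyEq
        (.of_forall fun z => rfl)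
    rw [show (fun x => φ (scaleWt wV c x)) = fun x => scaleWt wU c (φ x) from
      funext fun x => hφeq c x] at h1
    have h3 := h1.unique h2
    have h4 := congrArg (fun (T : (Fin a → ℂ) →L[ℂ] (Fin N → ℂ)) => T x) h3
    simp [Stmt17Aux.scaleCLM_apply] at h4
    exact h4
  have hLψsc : ∀ (c : ℂ) (y : Fin b → ℂ), Lψ (scaleWt wH c y) = scaleWt wU c (Lψ y) := by
    intro c y
    have hs0 : scaleCLM wH c (0 : Fin b → ℂ) = 0 := map_zero _
    have h1 : HasFDerivAt (fun y => ψ (scaleWt wH c y)) (Lψ.comp (scaleCLM wH c)) 0 := by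
      have h := hLψ
      rw [← hs0] at h
      exact (h.comp 0 (scaleCLM wH c).hasFDerivAt).congr_of_eventuallyEq
        (.of_forall fun z => rfl)
    have h2 : HasFDerivAt (fun y => scaleWt wU c (ψ y)) ((scaleCLM wU c).comp Lψ) 0 :=
      ((scaleCLM wU c).hasFDerivAt.comp 0 hLψ).congr_of_eventuallyEq
        (.of_forall fun z => rfl)
    rw [show (fun y => ψ (scaleWt wH c y)) = fun y => scaleWt wU c (ψ y) from
      funext fun y => hψeq c y] at h1
    have h3 := h1.unique h2
    have h4 := congrArg (fun (T : (Fin b → ℂ) →L[ℂ] (Fin N → ℂ)) => T y) h3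
    simp [Stmt17Aux.scaleCLM_apply] at h4
    exact h4
  have hTsc : ∀ (c : ℂ) (z : J → ℂ),
      Tc (fun j => c ^ wd j * z j) = scaleWt wU c (Tc z) := by
    intro c z
    rw [hTfun, hTfun]
    have h1 : (fun i => (fun j => c ^ wd j * z j) (Sum.inl i))
        = scaleWt wV c (fun i => z (Sum.inl i)) := rfl
    have h2 : (fun i => (fun j => c ^ wd j * z j) (Sum.inr i))
        = scaleWt wH c (fun i => z (Sum.inr i)) := rfl
    rw [h1, h2, hLφsc, hLψsc]
    funext i
    simp [scaleWt, mul_add]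
  -- the inverse M of T
  let eT : ((J → ℂ)) ≃ₗ[ℂ] (Fin N → ℂ) :=
    LinearEquiv.ofBijective ((Tc : (J → ℂ) →L[ℂ] (Fin N → ℂ)) : (J → ℂ) →ₗ[ℂ] (Fin N → ℂ)) hTbij
  let Mf : (Fin N → ℂ) → (J → ℂ) := fun u => eT.symm u
  have hMT : ∀ z : J → ℂ, Mf (Tc z) = z := fun z => eT.symm_apply_apply z
  have hTM : ∀ u : Fin N → ℂ, Tc (Mf u) = u := fun u => eT.apply_symm_apply u
  have hMsc : ∀ (c : ℂ) (u : Fin N → ℂ),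
      Mf (scaleWt wU c u) = fun j => c ^ wd j * Mf u j := by
    intro c u
    conv_lhs => rw [← hTM u]
    rw [← hTsc, hMT]
  -- entries of M
  let mm : J → Fin N → ℂ := fun j i => Mf (fun i' => if i = i' then 1 else 0) j
  have hMsum : ∀ (u : Fin N → ℂ) (j : J), Mf u j = ∑ i, u i * mm j i := by
    intro u j
    have h := LinearMap.pi_apply_eq_sum_univ
      (eT.symm : (Fin N → ℂ) →ₗ[ℂ] (J → ℂ)) u
    have h2 := congrFun h j
    rw [show (eT.symm : (Fin N → ℂ) →ₗ[ℂ] (J → ℂ)) u j = Mf u j from rfl] at h2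
    rw [h2, Finset.sum_apply]
    refine Finset.sum_congr rfl fun i _ => ?_
    simp only [Pi.smul_apply, smul_eq_mul]
    rfl
  have hmm : ∀ j i, mm j i ≠ 0 → wU i = wd j := by
    intro j i hne
    have key : ∀ c : ℂ, c ^ wU i * mm j i = c ^ wd j * mm j i := by
      intro c
      have h1 : scaleWt wU c (fun i' => if i = i' then 1 else 0)
          = c ^ wU i • (fun i' => if i = i' then (1:ℂ) else 0) := by
        funext i'
        by_cases h : i = i' <;> simp [scaleWt, h]
      have h2 := hMsc c (fun i' => if i = i' then 1 else 0)
      rw [h1] at h2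
      have h3 : Mf (c ^ wU i • fun i' => if i = i' then (1:ℂ) else 0)
          = c ^ wU i • Mf (fun i' => if i = i' then (1:ℂ) else 0) := by
        show eT.symm _ = _
        rw [map_smul]
      rw [h3] at h2
      have h4 := congrFun h2 j
      simpa using h4
    have h2 := key 2
    have h3 : (2:ℂ) ^ wU i = 2 ^ wd j := mul_right_cancel₀ hne h2
    have h4 : ((2 ^ wU i : ℕ) : ℂ) = ((2 ^ wd j : ℕ) : ℂ) := by push_cast; exact h3
    exact Nat.pow_right_injective le_rfl (Nat.cast_injective h4)
  have hTδ : ∀ (k : J) i, Tc (fun k' => if k = k' then 1 else 0) i = t i k := by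
    intro k i
    rw [hT]
    rw [Finset.sum_congr rfl (fun k' (_ : k' ∈ Finset.univ) =>
      mul_ite (k = k') (t i k') 1 0)]
    simp
    rw [Finset.sum_eq_single k (fun b _ hb => if_neg (Ne.symm hb)) (fun h => absurd (Finset.mem_univ k) h)]
    simp
  have hMTe : ∀ (j k : J), (∑ i, t i k * mm j i) = if k = j then 1 else 0 := by
    intro j k
    have h := hMT (fun k' => if k = k' then 1 else 0)
    have h2 := congrFun h j
    rw [hMsum] at h2
    rw [Finset.sum_congr rfl (fun i (_ : i ∈ Finset.univ) => by rw [hTδ])] at h2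
    exact h2
  -- the polynomial E
  let Ep : J → MvPolynomial J ℂ := fun j => (∑ i, C (mm j i) * R i) - X j
  have hEval : ∀ (z : J → ℂ) (j : J), eval z (Ep j) = Mf (Ftil z) j - z j := by
    intro z j
    show eval z ((∑ i, C (mm j i) * R i) - X j) = _
    rw [map_sub, map_sum, eval_X, hMsum]
    congr 1
    refine Finset.sum_congr rfl fun i _ => ?_
    rw [eval_mul, eval_C, ← hR, mul_comm]
  have hMF : ∀ (z : J → ℂ) (j : J), Mf (Ftil z) j = z j + eval z (Ep j) := by
    intro z j
    rw [hEval]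
    ring
  have hEphom : ∀ (j : J) m, coeff m (Ep j) ≠ 0 → degW wd m = wd j := by
    intro j m hne
    by_contra hdm
    apply hne
    show coeff m ((∑ i, C (mm j i) * R i) - X j) = 0
    rw [coeff_sub, coeff_sum]
    have h1 : ∀ i ∈ Finset.univ, coeff m (C (mm j i) * R i) = 0 := by
      intro i _
      rw [coeff_C_mul]
      by_cases hmm0 : mm j i = 0
      · rw [hmm0, zero_mul]
      · by_cases hc : coeff m (R i) = 0
        · rw [hc, mul_zero]
        · exact absurd (by rw [hRhom i m hc, hmm j i hmm0]) hdm
    rw [Finset.sum_eq_zero h1, coeff_X']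
    rw [if_neg, sub_zero]
    intro hsm
    exact hdm (by rw [← hsm, degW_single])
  have hEplin : ∀ (j k : J), coeff (Finsupp.single k 1) (Ep j) = 0 := by
    intro j k
    show coeff (Finsupp.single k 1) ((∑ i, C (mm j i) * R i) - X j) = 0
    rw [coeff_sub, coeff_sum]
    have h1 : ∀ i ∈ Finset.univ, coeff (Finsupp.single k 1) (C (mm j i) * R i)
        = t i k * mm j i := by
      intro i _
      rw [coeff_C_mul, mul_comm]
    rw [Finset.sum_congr rfl h1, hMTe, coeff_X']
    have : (Finsupp.single j 1 = Finsupp.single k 1) ↔ (k = j) := by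
      constructor
      · intro h; exact ((Finsupp.single_left_inj one_ne_zero).mp h).symm
      · intro h; rw [h]
    by_cases hkj : k = j
    · rw [if_pos (this.mpr hkj), if_pos hkj, sub_self]
    · rw [if_neg (fun h => hkj (this.mp h)), if_neg hkj, sub_self]
  have hEdep : ∀ (j : J) (z z' : J → ℂ), (∀ k, wd k < wd j → z k = z' k) →
      eval z (Ep j) = eval z' (Ep j) := by
    intro j z z' hz
    apply eval_congr_support (Ep j) (fun k => wd k < wd j) _ z z' hz
    intro m hm k hk
    refine weight_lt wd hwd m (wd j) (hEphom j m (MvPolynomial.mem_support_iff.mp hm)) ?_ k hk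
    intro k' hk'
    exact MvPolynomial.mem_support_iff.mp hm (by rw [hk']; exact hEplin j k')
  -- the inverse polynomials
  let Mpoly : J → MvPolynomial (Fin N) ℂ := fun j => ∑ i, C (mm j i) * X i
  have hMpoly : ∀ (u : Fin N → ℂ) (j : J), eval u (Mpoly j) = Mf u j := by
    intro u j
    show eval u (∑ i, C (mm j i) * X i) = _
    rw [map_sum, hMsum]
    refine Finset.sum_congr rfl fun i _ => ?_
    rw [eval_mul, eval_C, eval_X, mul_comm]
  let D : ℕ := Finset.univ.sup wd
  have hD : ∀ j, wd j ≤ D := fun j => Finset.le_sup (Finset.mem_univ j)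
  let G : (Fin N → ℂ) → (J → ℂ) := fun u j => eval u (Sseq Mpoly Ep D j)
  have hGfix : ∀ (u : Fin N → ℂ) (j : J), G u j = Mf u j - eval (G u) (Ep j) := by
    intro u j
    have h1 : G u j = eval u (Sseq Mpoly Ep (D+1) j) :=
      Sseq_stab Mpoly Ep wd hwd hEdep D D (D+1) le_rfl (by omega) u j (hD j)
    rw [h1, Sseq_eval_succ, hMpoly]
  -- G inverts Ftil
  have hGF : ∀ z : J → ℂ, G (Ftil z) = z := by
    intro z
    have key : ∀ d (j : J), wd j ≤ d → G (Ftil z) j = z j := by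
      intro d
      induction d with
      | zero => intro j hj; exact absurd hj (by have := hwd j; omega)
      | succ d ih =>
          intro j hj
          rw [hGfix, hMF]
          have : eval (G (Ftil z)) (Ep j) = eval z (Ep j) := by
            apply hEdep
            intro k hk
            exact ih k (by omega)
          rw [this]
          ring
    funext j
    exact key D j (hD j)
  have hFG : ∀ u : Fin N → ℂ, Ftil (G u) = u := by
    intro u
    have h1 : Mf (Ftil (G u)) = Mf u := by
      funext j
      rw [hMF]
      have h := hGfix u j
      rw [h]
      ring
    have h2 := congrArg Tc h1
    rwa [hTM, hTM] at h2
  -- assemble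
  let ι0 : (Fin N → ℂ) → (Fin a → ℂ) × (Fin b → ℂ) :=
    fun u => (fun i => G u (Sum.inl i), fun i => G u (Sum.inr i))
  have hsum : ∀ u, Sum.elim (ι0 u).1 (ι0 u).2 = G u :=
    fun u => funext fun s => by cases s <;> rfl
  have hleft : Function.LeftInverse ι0
      (fun p : (Fin a → ℂ) × (Fin b → ℂ) => μ (φ p.1) (ψ p.2)) := by
    intro p
    have h1 : G (Ftil (Sum.elim p.1 p.2)) = Sum.elim p.1 p.2 := hGF _
    show ((fun i => G (μ (φ p.1) (ψ p.2)) (Sum.inl i)),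
      (fun i => G (μ (φ p.1) (ψ p.2)) (Sum.inr i))) = p
    have h2 : μ (φ p.1) (ψ p.2) = Ftil (Sum.elim p.1 p.2) := rfl
    rw [h2]
    ext i
    · exact congrFun h1 (Sum.inl i)
    · exact congrFun h1 (Sum.inr i)
  have hright : Function.RightInverse ι0
      (fun p : (Fin a → ℂ) × (Fin b → ℂ) => μ (φ p.1) (ψ p.2)) := by
    intro u
    show μ (φ (ι0 u).1) (ψ (ι0 u).2) = u
    have h2 : μ (φ (ι0 u).1) (ψ (ι0 u).2) = Ftil (Sum.elim (ι0 u).1 (ι0 u).2) := rfl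
    rw [h2, hsum]
    exact hFG u
  exact ⟨⟨hleft.injective, hright.surjective⟩, ι0,
    ⟨fun s => Sseq Mpoly Ep D s, fun u => ⟨fun i => rfl, fun i => rfl⟩⟩, hleft, hright⟩
end
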